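/- arXiv:1705.08814 — 4 statements merged into one kernel-verified Lean document; each statement's English description precedes it below -/
import Mathlib

section
/- Assume θ* ∈ Θ ⊂ Θ_ρ ⊂ interior(Θ_I) ∩ interior(Θ_D) with Θ convex, let ε > 0 with ρ_ε > 0, assume every θ' ∈ Θ_D with ‖θ' − θ*‖ < ρ_ε satisfies μ_{θ'} > μ* − ε, and let f > 0. Fix p ∈ [0,1], η ∈ [0,1), and a finite family (θ*_c)_{c=1,…,C} ⊂ Θ_D with ‖θ*_c − θ*‖ ≥ η ρ_ε and μ_{θ*_c} ≥ μ* − ε for each c, whose cones C̃_p(θ*_c) cover ∇ψ(Θ_ρ \ B(θ*, ρ_ε)). Then for every β ∈ (0,1) and b > 1, writing I = ⌈log_b(βt + β)⌉: Pr_{θ*}( ⋃_{1≤n≤t} { θ̂_n ∈ Θ_ρ and K_inf(θ̂_n, μ* − ε) ≥ f(t/n)/n } ) ≤ Σ_{i=0}^{I−2} Σ_{c=1}^{C} Pr_{θ*}( ⋃_{b^i ≤ n < b^{i+1}} E_{c,p}(n,t) ) + Σ_{c=1}^{C} Pr_{θ*}( ⋃_{n = b^{I−1}}^{t} E_{c,p}(n,t)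 ). -/
open MeasureTheory Real Set Metric ProbabilityTheory
open scoped InnerProductSpace ENNReal BigOperators

noncomputable section

/-- The log-partition function of the exponential family generated by `F` and `ν₀`. -/
noncomputable def psiFun {K : ℕ} (ν₀ : Measure ℝ) (F : ℝ → EuclideanSpace ℝ (Fin K))
    (θ : EuclideanSpace ℝ (Fin K)) : ℝ :=
  Real.log ((∫⁻ x, ENNReal.ofReal (Real.exp ⟪θ, F x⟫_ℝ) ∂ν₀).toReal)

/-- The parameter set `Θ_D` of the family. -/
def ThetaD {K : ℕ} (ν₀ : Measure ℝ) (F : ℝ → EuclideanSpace ℝ (Fin K)) :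
    Set (EuclideanSpace ℝ (Fin K)) :=
  {θ | (∫⁻ x, ENNReal.ofReal (Real.exp ⟪θ, F x⟫_ℝ) ∂ν₀) < ⊤}

/-- The member `ν_θ` of the exponential family. -/
noncomputable def nuP {K : ℕ} (ν₀ : Measure ℝ) (F : ℝ → EuclideanSpace ℝ (Fin K))
    (θ : EuclideanSpace ℝ (Fin K)) : Measure ℝ :=
  ν₀.withDensity (fun x => ENNReal.ofReal (Real.exp (⟪θ, F x⟫_ℝ - psiFun ν₀ F θ)))

/-- The mean `μ_θ` of `ν_θ`. -/
noncomputable def meanP {K : ℕ} (ν₀ : Measure ℝ) (F : ℝ → EuclideanSpace ℝ (Fin K))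
    (θ : EuclideanSpace ℝ (Fin K)) : ℝ :=
  ∫ x, x ∂(nuP ν₀ F θ)

/-- The Bregman divergence `B^ψ(θ, θ') = ψ(θ') - ψ(θ) - ⟨θ' - θ, ∇ψ(θ)⟩`. -/
noncomputable def breg {K : ℕ} (ψ : EuclideanSpace ℝ (Fin K) → ℝ)
    (θ θ' : EuclideanSpace ℝ (Fin K)) : ℝ :=
  ψ θ' - ψ θ - ⟪θ' - θ, gradient ψ θ⟫_ℝ

/-- The Hessian of `ψ` at `θ`. -/
noncomputable def hess {K : ℕ} (ψ : EuclideanSpace ℝ (Fin K) → ℝ)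
    (θ : EuclideanSpace ℝ (Fin K)) : EuclideanSpace ℝ (Fin K) →L[ℝ] EuclideanSpace ℝ (Fin K) :=
  fderiv ℝ (fun x => gradient ψ x) θ

/-- Smallest eigenvalue of a symmetric operator. -/
noncomputable def lamMin {K : ℕ}
    (H : EuclideanSpace ℝ (Fin K) →L[ℝ] EuclideanSpace ℝ (Fin K)) : ℝ :=
  sInf {r | ∃ v : EuclideanSpace ℝ (Fin K), ‖v‖ = 1 ∧ r = ⟪H v, v⟫_ℝ}

/-- Largest eigenvalue of a symmetric operator. -/
noncomputable def lamMax {K : ℕ}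
    (H : EuclideanSpace ℝ (Fin K) →L[ℝ] EuclideanSpace ℝ (Fin K)) : ℝ :=
  sSup {r | ∃ v : EuclideanSpace ℝ (Fin K), ‖v‖ = 1 ∧ r = ⟪H v, v⟫_ℝ}

/-- The invertible parameter set `Θ_I`. -/
def ThetaI {K : ℕ} (ψ : EuclideanSpace ℝ (Fin K) → ℝ) : Set (EuclideanSpace ℝ (Fin K)) :=
  {θ | 0 < lamMin (hess ψ θ) ∧ lamMin (hess ψ θ) ≤ lamMax (hess ψ θ)}

/-- `v_ρ`: infimum of the smallest Hessian eigenvalue over a set of parameters. -/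
noncomputable def vRho {K : ℕ} (ψ : EuclideanSpace ℝ (Fin K) → ℝ)
    (Θρ : Set (EuclideanSpace ℝ (Fin K))) : ℝ :=
  sInf {r | ∃ θ ∈ Θρ, r = lamMin (hess ψ θ)}

/-- `V_ρ`: supremum of the largest Hessian eigenvalue over a set of parameters. -/
noncomputable def VRho {K : ℕ} (ψ : EuclideanSpace ℝ (Fin K) → ℝ)
    (Θρ : Set (EuclideanSpace ℝ (Fin K))) : ℝ :=
  sSup {r | ∃ θ ∈ Θρ, r = lamMax (hess ψ θ)}

/-- The cone `C̃_p(θ) = {y : ⟨θ* - θ, ∇ψ(θ) - y⟩ ≥ p ‖θ* - θ‖ ‖∇ψ(θ) - y‖}`. -/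
def coneC {K : ℕ} (ψ : EuclideanSpace ℝ (Fin K) → ℝ) (θstar : EuclideanSpace ℝ (Fin K))
    (p : ℝ) (θ : EuclideanSpace ℝ (Fin K)) : Set (EuclideanSpace ℝ (Fin K)) :=
  {y | ⟪θstar - θ, gradient ψ θ - y⟫_ℝ ≥ p * ‖θstar - θ‖ * ‖gradient ψ θ - y‖}

/-- `X` is an i.i.d. sequence with common law `ν` under `P`. -/
def IsIID {Ω : Type*} [MeasurableSpace Ω] (P : Measure Ω) (X : ℕ → Ω → ℝ)
    (ν : Measure ℝ) : Prop :=
  (∀ i, Measurable (X i)) ∧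
    iIndepFun X P ∧
    ∀ i, P.map (X i) = ν

/-- The empirical sufficient statistic `F̂_n = (1/n) Σ_{i<n} F(X_i)`. -/
noncomputable def hatF {K : ℕ} {Ω : Type*} (F : ℝ → EuclideanSpace ℝ (Fin K))
    (X : ℕ → Ω → ℝ) (n : ℕ) (ω : Ω) : EuclideanSpace ℝ (Fin K) :=
  (n : ℝ)⁻¹ • ∑ i ∈ Finset.range n, F (X i ω)

/-- `K_inf(θ̂, μ) = inf{B^ψ(θ̂, θ') : θ' ∈ Θ_D, μ_{θ'} ≥ μ}`. -/
noncomputable def Kinf {K : ℕ} (ν₀ : Measure ℝ) (F : ℝ → EuclideanSpace ℝ (Fin K))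
    (θh : EuclideanSpace ℝ (Fin K)) (μ : ℝ) : ℝ :=
  sInf {r | ∃ θ' ∈ ThetaD ν₀ F, meanP ν₀ F θ' ≥ μ ∧ r = breg (psiFun ν₀ F) θh θ'}

/-- `ρ_ε = inf{‖θ' - θ‖ : θ, θ' ∈ Θ_D, μ_θ = μ*, μ_{θ'} = μ* - ε}`. -/
noncomputable def rhoEps {K : ℕ} (ν₀ : Measure ℝ) (F : ℝ → EuclideanSpace ℝ (Fin K))
    (θstar : EuclideanSpace ℝ (Fin K)) (ε : ℝ) : ℝ :=
  sInf {r | ∃ θ ∈ ThetaD ν₀ F, ∃ θ' ∈ ThetaD ν₀ F,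
    meanP ν₀ F θ = meanP ν₀ F θstar ∧ meanP ν₀ F θ' = meanP ν₀ F θstar - ε ∧ r = ‖θ' - θ‖}

/-- The event `E_{c,p}(n,t)`: the empirical parameter lies in `Θ_ρ`, the empirical
sufficient statistic lies in the cone `C̃_p(θ_c)`, and `B^ψ(θ̂_n, θ_c) ≥ f(t/n)/n`. -/
def Ecp {K : ℕ} {Ω : Type*} (ν₀ : Measure ℝ) (F : ℝ → EuclideanSpace ℝ (Fin K))
    (Θρ : Set (EuclideanSpace ℝ (Fin K))) (θstar θc : EuclideanSpace ℝ (Fin K)) (p : ℝ)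
    (f : ℝ → ℝ) (X : ℕ → Ω → ℝ) (t n : ℕ) : Set Ω :=
  {ω | (∃ θh ∈ Θρ, gradient (psiFun ν₀ F) θh = hatF F X n ω ∧
          breg (psiFun ν₀ F) θh θc ≥ f ((t : ℝ) / (n : ℝ)) / (n : ℝ)) ∧
        hatF F X n ω ∈ coneC (psiFun ν₀ F) θstar p θc}



section Aux

variable {K : ℕ}

private lemma integrand_meas {F : ℝ → EuclideanSpace ℝ (Fin K)} (hF : Measurable F)
    (θ : EuclideanSpace ℝ (Fin K)) :
    Measurable fun x => ENNReal.ofReal (Real.exp ⟪θ, F x⟫_ℝ) :=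
  ENNReal.measurable_ofReal.comp
    (Real.measurable_exp.comp (Measurable.inner measurable_const hF))

private lemma lint_convex (ν₀ : Measure ℝ) {F : ℝ → EuclideanSpace ℝ (Fin K)}
    (hF : Measurable F) (θ₁ θ₂ : EuclideanSpace ℝ (Fin K)) {a c : ℝ}
    (ha : 0 ≤ a) (hc : 0 ≤ c) (hac : a + c = 1) :
    (∫⁻ x, ENNReal.ofReal (Real.exp ⟪a • θ₁ + c • θ₂, F x⟫_ℝ) ∂ν₀)
      ≤ (∫⁻ x, ENNReal.ofReal (Real.exp ⟪θ₁, F x⟫_ℝ) ∂ν₀) ^ a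
        * (∫⁻ x, ENNReal.ofReal (Real.exp ⟪θ₂, F x⟫_ℝ) ∂ν₀) ^ c := by
  rcases eq_or_lt_of_le ha with rfl | ha'
  · have hc1 : c = 1 := by linarith
    subst hc1; simp
  rcases eq_or_lt_of_le hc with rfl | hc'
  · have ha1 : a = 1 := by linarith
    subst ha1; simp
  have ha1 : a < 1 := by linarith
  have hpq : (1/a).HolderConjugate (1/c) :=
    Real.holderConjugate_iff.mpr ⟨one_lt_one_div ha' ha1, by rw [one_div, one_div, inv_inv, inv_inv]; exact hac⟩
  have hpt : ∀ x, ENNReal.ofReal (Real.exp ⟪a • θ₁ + c • θ₂, F x⟫_ℝ)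
      = (ENNReal.ofReal (Real.exp ⟪θ₁, F x⟫_ℝ)) ^ a
        * (ENNReal.ofReal (Real.exp ⟪θ₂, F x⟫_ℝ)) ^ c := by
    intro x
    rw [inner_add_left, real_inner_smul_left, real_inner_smul_left, mul_comm a, mul_comm c,
      Real.exp_add, Real.exp_mul, Real.exp_mul, ENNReal.ofReal_mul (by positivity),
      ENNReal.ofReal_rpow_of_pos (Real.exp_pos _), ENNReal.ofReal_rpow_of_pos (Real.exp_pos _)]
  calc (∫⁻ x, ENNReal.ofReal (Real.exp ⟪a • θ₁ + c • θ₂, F x⟫_ℝ) ∂ν₀)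
      = ∫⁻ x, ((fun y => ENNReal.ofReal (Real.exp ⟪θ₁, F y⟫_ℝ) ^ a)
          * fun y => ENNReal.ofReal (Real.exp ⟪θ₂, F y⟫_ℝ) ^ c) x ∂ν₀ :=
        lintegral_congr fun x => by simpa using hpt x
    _ ≤ (∫⁻ x, (ENNReal.ofReal (Real.exp ⟪θ₁, F x⟫_ℝ) ^ a) ^ (1/a) ∂ν₀) ^ (1/(1/a))
        * (∫⁻ x, (ENNReal.ofReal (Real.exp ⟪θ₂, F x⟫_ℝ) ^ c) ^ (1/c) ∂ν₀) ^ (1/(1/c)) :=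
        ENNReal.lintegral_mul_le_Lp_mul_Lq ν₀ hpq
          (((integrand_meas hF θ₁).pow measurable_const).aemeasurable)
          (((integrand_meas hF θ₂).pow measurable_const).aemeasurable)
    _ = _ := by
        rw [one_div_one_div, one_div_one_div]
        congr 2
        · exact lintegral_congr fun x => by
            rw [← ENNReal.rpow_mul, mul_one_div_cancel ha'.ne', ENNReal.rpow_one]
        · exact lintegral_congr fun x => by
            rw [← ENNReal.rpow_mul, mul_one_div_cancel hc'.ne', ENNReal.rpow_one]

private lemma psi_convexOn (ν₀ : Measure ℝ) {F : ℝ → EuclideanSpace ℝ (Fin K)}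
    (hF : Measurable F) : ConvexOn ℝ (ThetaD ν₀ F) (psiFun ν₀ F) := by
  have hconvD : Convex ℝ (ThetaD ν₀ F) := by
    intro θ₁ h₁ θ₂ h₂ a c ha hc hac
    have h := lint_convex ν₀ hF θ₁ θ₂ ha hc hac
    refine lt_of_le_of_lt h (ENNReal.mul_lt_top ?_ ?_)
    · exact ENNReal.rpow_lt_top_of_nonneg ha h₁.ne
    · exact ENNReal.rpow_lt_top_of_nonneg hc h₂.ne
  refine ⟨hconvD, ?_⟩
  intro θ₁ h₁ θ₂ h₂ a c ha hc hac
  by_cases hν : ν₀ = 0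
  · subst hν
    simp only [psiFun, lintegral_zero_measure, ENNReal.toReal_zero, Real.log_zero,
      smul_eq_mul, mul_zero, add_zero, le_refl]
  have hne : ∀ θ : EuclideanSpace ℝ (Fin K),
      (∫⁻ x, ENNReal.ofReal (Real.exp ⟪θ, F x⟫_ℝ) ∂ν₀) ≠ 0 := by
    intro θ h0
    apply hν
    have h0' := (lintegral_eq_zero_iff (integrand_meas hF θ)).mp h0
    rw [Filter.EventuallyEq, ae_iff] at h0'
    have huniv : {x : ℝ | ¬ (ENNReal.ofReal (Real.exp ⟪θ, F x⟫_ℝ) = (0 : ℝ → ℝ≥0∞) x)}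
        = Set.univ :=
      Set.eq_univ_of_forall fun x => by
        simpa using (ENNReal.ofReal_pos.mpr (Real.exp_pos _)).ne'
    rw [huniv] at h0'
    exact Measure.measure_univ_eq_zero.mp h0'
  have hmem := hconvD h₁ h₂ ha hc hac
  have hle := lint_convex ν₀ hF θ₁ θ₂ ha hc hac
  have h₁t : 0 < (∫⁻ x, ENNReal.ofReal (Real.exp ⟪θ₁, F x⟫_ℝ) ∂ν₀).toReal :=
    ENNReal.toReal_pos (hne θ₁) h₁.ne
  have h₂t : 0 < (∫⁻ x, ENNReal.ofReal (Real.exp ⟪θ₂, F x⟫_ℝ) ∂ν₀).toReal :=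
    ENNReal.toReal_pos (hne θ₂) h₂.ne
  have hct : 0 < (∫⁻ x, ENNReal.ofReal (Real.exp ⟪a • θ₁ + c • θ₂, F x⟫_ℝ) ∂ν₀).toReal :=
    ENNReal.toReal_pos (hne _) hmem.ne
  have hrhs_ne : (∫⁻ x, ENNReal.ofReal (Real.exp ⟪θ₁, F x⟫_ℝ) ∂ν₀) ^ a
      * (∫⁻ x, ENNReal.ofReal (Real.exp ⟪θ₂, F x⟫_ℝ) ∂ν₀) ^ c ≠ ⊤ :=
    (ENNReal.mul_lt_top (ENNReal.rpow_lt_top_of_nonneg ha h₁.ne)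
      (ENNReal.rpow_lt_top_of_nonneg hc h₂.ne)).ne
  have hle' : (∫⁻ x, ENNReal.ofReal (Real.exp ⟪a • θ₁ + c • θ₂, F x⟫_ℝ) ∂ν₀).toReal
      ≤ (∫⁻ x, ENNReal.ofReal (Real.exp ⟪θ₁, F x⟫_ℝ) ∂ν₀).toReal ^ a
        * (∫⁻ x, ENNReal.ofReal (Real.exp ⟪θ₂, F x⟫_ℝ) ∂ν₀).toReal ^ c := by
    have := ENNReal.toReal_mono hrhs_ne hle
    rwa [ENNReal.toReal_mul, ← ENNReal.toReal_rpow, ← ENNReal.toReal_rpow] at this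
  calc psiFun ν₀ F (a • θ₁ + c • θ₂)
      = Real.log (∫⁻ x, ENNReal.ofReal (Real.exp ⟪a • θ₁ + c • θ₂, F x⟫_ℝ) ∂ν₀).toReal := rfl
    _ ≤ Real.log ((∫⁻ x, ENNReal.ofReal (Real.exp ⟪θ₁, F x⟫_ℝ) ∂ν₀).toReal ^ a
        * (∫⁻ x, ENNReal.ofReal (Real.exp ⟪θ₂, F x⟫_ℝ) ∂ν₀).toReal ^ c) :=
        Real.log_le_log hct hle'
    _ = a * Real.log (∫⁻ x, ENNReal.ofReal (Real.exp ⟪θ₁, F x⟫_ℝ) ∂ν₀).toReal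
        + c * Real.log (∫⁻ x, ENNReal.ofReal (Real.exp ⟪θ₂, F x⟫_ℝ) ∂ν₀).toReal := by
        rw [Real.log_mul (Real.rpow_pos_of_pos h₁t a).ne' (Real.rpow_pos_of_pos h₂t c).ne',
          Real.log_rpow h₁t, Real.log_rpow h₂t]
    _ = a • psiFun ν₀ F θ₁ + c • psiFun ν₀ F θ₂ := by
        simp [psiFun, smul_eq_mul]

end Aux

/-- Peeling and cone covering decomposition. -/
theorem peeling_and_covering {K : ℕ} (hK : 1 ≤ K) (ν₀ : Measure ℝ) [SigmaFinite ν₀]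
    (F : ℝ → EuclideanSpace ℝ (Fin K)) (hF : Measurable F)
    (Θ : Set (EuclideanSpace ℝ (Fin K))) (hΘconv : Convex ℝ Θ) (ρ : ℝ) (hρ : 0 < ρ)
    (θstar : EuclideanSpace ℝ (Fin K)) (hθΘ : θstar ∈ Θ)
    (hsub : thickening ρ Θ ⊆ interior (ThetaI (psiFun ν₀ F)) ∩ interior (ThetaD ν₀ F))
    (ε : ℝ) (hε : 0 < ε) (hρε : 0 < rhoEps ν₀ F θstar ε)
    (hgap : ∀ θ' ∈ ThetaD ν₀ F, ‖θ' - θstar‖ < rhoEps ν₀ F θstar ε →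
      meanP ν₀ F θ' > meanP ν₀ F θstar - ε)
    (f : ℝ → ℝ) (hf : ∀ x, 0 < f x)
    (p : ℝ) (hp : p ∈ Set.Icc (0:ℝ) 1) (η : ℝ) (hη : η ∈ Set.Ico (0:ℝ) 1)
    (C : ℕ) (θs : Fin C → EuclideanSpace ℝ (Fin K))
    (hθs : ∀ c, θs c ∈ ThetaD ν₀ F ∧ ‖θs c - θstar‖ ≥ η * rhoEps ν₀ F θstar ε ∧
      meanP ν₀ F (θs c) ≥ meanP ν₀ F θstar - ε)
    (hcover : gradient (psiFun ν₀ F) ''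
        (thickening ρ Θ \ closedBall θstar (rhoEps ν₀ F θstar ε))
      ⊆ ⋃ c : Fin C, coneC (psiFun ν₀ F) θstar p (θs c))
    {Ω : Type*} [MeasurableSpace Ω] (P : Measure Ω) [IsProbabilityMeasure P]
    (X : ℕ → Ω → ℝ) (hX : IsIID P X (nuP ν₀ F θstar))
    (t : ℕ) (ht : 1 ≤ t) (β : ℝ) (hβ : β ∈ Set.Ioo (0:ℝ) 1) (b : ℝ) (hb : 1 < b) :
    P (⋃ n ∈ {n : ℕ | 1 ≤ n ∧ n ≤ t},
        {ω | ∃ θh ∈ thickening ρ Θ, gradient (psiFun ν₀ F) θh = hatF F X n ω ∧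
          Kinf ν₀ F θh (meanP ν₀ F θstar - ε) ≥ f ((t : ℝ) / (n : ℝ)) / (n : ℝ)})
      ≤ (∑ i ∈ Finset.range (⌈Real.logb b (β * t + β)⌉ - 1).toNat, ∑ c : Fin C,
            P (⋃ n ∈ {n : ℕ | (b : ℝ) ^ i ≤ (n : ℝ) ∧ (n : ℝ) < b ^ (i + 1)},
                Ecp ν₀ F (thickening ρ Θ) θstar (θs c) p f X t n))
          + ∑ c : Fin C,
            P (⋃ n ∈ {n : ℕ | b ^ (⌈Real.logb b (β * t + β)⌉ - 1) ≤ (n : ℝ) ∧ n ≤ t},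
                Ecp ν₀ F (thickening ρ Θ) θstar (θs c) p f X t n) := by
  classical
  set ψ := psiFun ν₀ F with hψdef
  set ρε := rhoEps ν₀ F θstar ε with hρεdef
  set Θρ := thickening ρ Θ with hΘρdef
  have hconv : ConvexOn ℝ (ThetaD ν₀ F) ψ := psi_convexOn ν₀ hF
  have hcont : ContinuousOn ψ (interior (ThetaD ν₀ F)) := hconv.continuousOn_interior
  -- Key pointwise inclusion
  have key : ∀ n : ℕ, 1 ≤ n →
      {ω | ∃ θh ∈ Θρ, gradient ψ θh = hatF F X n ω ∧
          Kinf ν₀ F θh (meanP ν₀ F θstar - ε) ≥ f ((t : ℝ) / (n : ℝ)) / (n : ℝ)}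
        ⊆ ⋃ c : Fin C, Ecp ν₀ F Θρ θstar (θs c) p f X t n := by
    intro n hn ω hω
    obtain ⟨θh, hθhρ, hgrad, hKinf⟩ := hω
    have hnpos : (0:ℝ) < n := by exact_mod_cast hn
    have hδ : 0 < f ((t : ℝ) / (n : ℝ)) / (n : ℝ) := div_pos (hf _) hnpos
    set δ := f ((t : ℝ) / (n : ℝ)) / (n : ℝ) with hδdef
    set S := {r | ∃ θ' ∈ ThetaD ν₀ F,
        meanP ν₀ F θ' ≥ meanP ν₀ F θstar - ε ∧ r = breg ψ θh θ'} with hSdef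
    have hKS : Kinf ν₀ F θh (meanP ν₀ F θstar - ε) = sInf S := rfl
    have hbdd : BddBelow S := by
      by_contra h
      rw [hKS, Real.sInf_of_not_bddBelow h] at hKinf
      linarith
    have hKle : ∀ r ∈ S, δ ≤ r := fun r hr => le_trans hKinf (csInf_le hbdd hr)
    have hout : θh ∉ closedBall θstar ρε := by
      intro hin
      rw [mem_closedBall, dist_eq_norm] at hin
      have hθhD : θh ∈ interior (ThetaD ν₀ F) := (hsub hθhρ).2
      have hψc : ContinuousAt ψ θh := hcont.continuousAt (isOpen_interior.mem_nhds hθhD)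
      set φ := fun s : ℝ => breg ψ θh ((1 - s) • θstar + s • θh) with hφdef
      have hbc : ContinuousAt (fun y => breg ψ θh y) θh := by
        have hinner : Continuous fun y : EuclideanSpace ℝ (Fin K) =>
            ⟪y - θh, gradient ψ θh⟫_ℝ :=
          (continuous_id.sub continuous_const).inner continuous_const
        simp only [breg]
        exact (hψc.sub continuousAt_const).sub hinner.continuousAt
      have hline : Continuous fun s : ℝ => (1 - s) • θstar + s • θh := by
        exact ((continuous_const.sub continuous_id).smul continuous_const).add
          (continuous_id.smul continuous_const)
      have hφt : Filter.Tendsto φ (nhds 1) (nhds 0) := by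
        have h2 : Filter.Tendsto (fun s : ℝ => (1 - s) • θstar + s • θh)
            (nhds 1) (nhds θh) := by
          have := hline.continuousAt (x := (1:ℝ))
          unfold ContinuousAt at this
          simpa using this
        have h3 : Filter.Tendsto (fun y => breg ψ θh y) (nhds θh) (nhds 0) := by
          have := hbc
          unfold ContinuousAt at this
          simpa [breg] using this
        exact h3.comp h2
      have hnebot : (nhdsWithin (1:ℝ) (Ioo 0 1)).NeBot := by
        apply mem_closure_iff_nhdsWithin_neBot.mp
        rw [closure_Ioo (by norm_num : (0:ℝ) ≠ 1)]
        exact ⟨by norm_num, le_refl _⟩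
      have hev : ∀ᶠ s in nhdsWithin (1:ℝ) (Ioo 0 1), φ s < δ ∧ s ∈ Ioo (0:ℝ) 1 :=
        (((hφt.eventually (eventually_lt_nhds hδ)).filter_mono nhdsWithin_le_nhds).and
          eventually_mem_nhdsWithin)
      obtain ⟨s, hsδ, hsmem⟩ := hev.exists
      have hθ'ρ : ((1 - s) • θstar + s • θh) ∈ Θρ :=
        (hΘconv.thickening ρ) (self_subset_thickening hρ Θ hθΘ) hθhρ
          (by linarith [hsmem.2]) hsmem.1.le (by ring)
      have hθ'D : ((1 - s) • θstar + s • θh) ∈ ThetaD ν₀ F :=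
        interior_subset (hsub hθ'ρ).2
      have hθ'norm : ‖((1 - s) • θstar + s • θh) - θstar‖ < ρε := by
        have heq : ((1 - s) • θstar + s • θh) - θstar = s • (θh - θstar) := by
          module
        rw [heq, norm_smul, Real.norm_eq_abs, abs_of_pos hsmem.1]
        calc s * ‖θh - θstar‖ ≤ s * ρε :=
              mul_le_mul_of_nonneg_left hin hsmem.1.le
          _ < 1 * ρε := by
              have := hsmem.2
              nlinarith
          _ = ρε := one_mul _
      have hmean : meanP ν₀ F ((1 - s) • θstar + s • θh) ≥ meanP ν₀ F θstar - ε :=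
        le_of_lt (hgap _ hθ'D hθ'norm)
      have : δ ≤ φ s := hKle _ ⟨_, hθ'D, hmean, rfl⟩
      linarith
    have himg : hatF F X n ω ∈ ⋃ c : Fin C, coneC ψ θstar p (θs c) :=
      hcover ⟨θh, ⟨hθhρ, hout⟩, hgrad⟩
    rw [mem_iUnion] at himg
    obtain ⟨c, hc⟩ := himg
    refine mem_iUnion.mpr ⟨c, ⟨⟨θh, hθhρ, hgrad, ?_⟩, hc⟩⟩
    exact hKle _ ⟨θs c, (hθs c).1, (hθs c).2.2, rfl⟩
  -- Peeling of the index range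
  set I : ℤ := ⌈Real.logb b (β * (t : ℝ) + β)⌉ - 1 with hIdef
  set N : ℕ := I.toNat with hNdef
  have hb0 : (0:ℝ) < b := lt_trans zero_lt_one hb
  have hcovn : ∀ n : ℕ, 1 ≤ n → n ≤ t →
      (∃ i ∈ Finset.range N, (b:ℝ) ^ i ≤ (n : ℝ) ∧ (n : ℝ) < b ^ (i + 1))
        ∨ (b ^ I ≤ (n : ℝ)) := by
    intro n h1 h2
    by_cases hcase : b ^ I ≤ (n : ℝ)
    · exact Or.inr hcase
    push_neg at hcase
    left
    have hn1 : (1:ℝ) ≤ (n : ℝ) := by exact_mod_cast h1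
    have hIpos : 0 < I := by
      by_contra h
      push_neg at h
      have : (b:ℝ) ^ I ≤ 1 := zpow_le_one_of_nonpos₀ hb.le h
      linarith
    have hNI : (N : ℤ) = I := Int.toNat_of_nonneg hIpos.le
    have hbN : (n : ℝ) < b ^ N := by
      have : (b:ℝ) ^ (N : ℤ) = b ^ I := by rw [hNI]
      rw [zpow_natCast] at this
      rw [this]
      exact hcase
    set Q : ℕ → Prop := fun i => (b:ℝ) ^ i ≤ (n : ℝ) with hQdef
    have hQ0 : Q 0 := by simpa [hQdef] using hn1
    have hkQ : Q (Nat.findGreatest Q N) := Nat.findGreatest_spec (Nat.zero_le N) hQ0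
    have hkle : Nat.findGreatest Q N ≤ N := Nat.findGreatest_le N
    have hkN : Nat.findGreatest Q N < N := by
      rcases lt_or_eq_of_le hkle with h | h
      · exact h
      · exfalso
        rw [h] at hkQ
        exact absurd hkQ (not_le.mpr hbN)
    have hk1 : (n : ℝ) < b ^ (Nat.findGreatest Q N + 1) := by
      have := Nat.findGreatest_is_greatest (Nat.lt_succ_self (Nat.findGreatest Q N))
        (Nat.succ_le_of_lt hkN)
      exact not_le.mp this
    exact ⟨Nat.findGreatest Q N, Finset.mem_range.mpr hkN, hkQ, hk1⟩
  -- Set inclusion into the two unions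
  have hsets : (⋃ n ∈ {n : ℕ | 1 ≤ n ∧ n ≤ t},
        {ω | ∃ θh ∈ Θρ, gradient ψ θh = hatF F X n ω ∧
          Kinf ν₀ F θh (meanP ν₀ F θstar - ε) ≥ f ((t : ℝ) / (n : ℝ)) / (n : ℝ)}) ⊆
      (⋃ i ∈ Finset.range N, ⋃ c : Fin C,
        ⋃ n ∈ {n : ℕ | (b : ℝ) ^ i ≤ (n : ℝ) ∧ (n : ℝ) < b ^ (i + 1)},
          Ecp ν₀ F Θρ θstar (θs c) p f X t n) ∪
      (⋃ c : Fin C, ⋃ n ∈ {n : ℕ | b ^ I ≤ (n : ℝ) ∧ n ≤ t},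
          Ecp ν₀ F Θρ θstar (θs c) p f X t n) := by
    intro ω hω
    simp only [mem_iUnion, mem_setOf_eq, exists_prop] at hω
    obtain ⟨n, ⟨h1, h2⟩, hev⟩ := hω
    have hmem := key n h1 hev
    rw [mem_iUnion] at hmem
    obtain ⟨c, hc⟩ := hmem
    rcases hcovn n h1 h2 with ⟨i, hi, hlo, hhi⟩ | hlast
    · left
      exact mem_biUnion hi (mem_iUnion.mpr ⟨c, mem_biUnion ⟨hlo, hhi⟩ hc⟩)
    · right
      exact mem_iUnion.mpr ⟨c, mem_biUnion ⟨hlast, h2⟩ hc⟩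
  refine le_trans (measure_mono hsets) (le_trans (measure_union_le _ _) (add_le_add ?_ ?_))
  · refine le_trans (measure_biUnion_finset_le _ _) (Finset.sum_le_sum fun i _ => ?_)
    exact measure_iUnion_fintype_le _ _
  · exact measure_iUnion_fintype_le _ _
end
end

section
/- Assume θ* ∈ Θ ⊂ Θ_ρ ⊂ interior(Θ_I) ∩ interior(Θ_D) with Θ convex, let ε > 0 with ρ_ε > 0, and let θ*_c ∈ Θ_ρ ∩ Θ_D with ‖θ* − θ*_c‖ ≥ η ρ_ε, where p ∈ [0,1], η ∈ (0,1]. Let f ≥ 0 be such that n ↦ n·f(t/n) is non-decreasing. Then for any integers 1 ≤ n_i < n_{i+1}: Pr_{θ*}( ⋃_{n=n_i}^{n_{i+1}−1} E_{c,p}(n,t) ) ≤ exp( −n_i α² − χ √(n_i f(t/n_i)) ) · Pr_{θ*_c}( ⋃_{n=n_i}^{n_{i+1}−1} E_{c,p}(n,t) ), where α = η ρ_ε √(v_ρ/2) and χ = p η ρ_ε √(2 v_ρ²/V_ρ). -/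
open MeasureTheory Real Set Metric ProbabilityTheory
open scoped InnerProductSpace ENNReal BigOperators

noncomputable section

set_option maxHeartbeats 2000000
set_option synthInstance.maxHeartbeats 1000000

section AuxSpec

variable {K : ℕ}
local notation "E" => EuclideanSpace ℝ (Fin K)

lemma bddBelow_lamSet (H : E →L[ℝ] E) :
    BddBelow {r | ∃ v : E, ‖v‖ = 1 ∧ r = ⟪H v, v⟫_ℝ} := by
  refine ⟨-‖H‖, fun r hr => ?_⟩
  obtain ⟨v, hv, rfl⟩ := hr
  have h1 : |⟪H v, v⟫_ℝ| ≤ ‖H v‖ * ‖v‖ := abs_real_inner_le_norm _ _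
  have h2 : ‖H v‖ ≤ ‖H‖ * ‖v‖ := H.le_opNorm v
  rw [hv] at h1 h2
  simp only [mul_one] at h1 h2
  linarith [abs_le.1 h1]

lemma bddAbove_lamSet (H : E →L[ℝ] E) :
    BddAbove {r | ∃ v : E, ‖v‖ = 1 ∧ r = ⟪H v, v⟫_ℝ} := by
  refine ⟨‖H‖, fun r hr => ?_⟩
  obtain ⟨v, hv, rfl⟩ := hr
  have h1 : |⟪H v, v⟫_ℝ| ≤ ‖H v‖ * ‖v‖ := abs_real_inner_le_norm _ _
  have h2 : ‖H v‖ ≤ ‖H‖ * ‖v‖ := H.le_opNorm v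
  rw [hv] at h1 h2
  simp only [mul_one] at h1 h2
  linarith [abs_le.1 h1]

lemma lamMin_mul_sq_norm_le (H : E →L[ℝ] E) (w : E) :
    lamMin H * ‖w‖ ^ 2 ≤ ⟪H w, w⟫_ℝ := by
  rcases eq_or_ne w 0 with rfl | hw
  · simp
  · have hnorm : ‖w‖ ≠ 0 := norm_ne_zero_iff.2 hw
    set v : E := ‖w‖⁻¹ • w with hv
    have hv1 : ‖v‖ = 1 := by
      rw [hv, norm_smul]
      simp [abs_of_nonneg (inv_nonneg.2 (norm_nonneg w)), inv_mul_cancel₀ hnorm]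
    have hmem : ⟪H v, v⟫_ℝ ∈ {r | ∃ v : E, ‖v‖ = 1 ∧ r = ⟪H v, v⟫_ℝ} := ⟨v, hv1, rfl⟩
    have hle : lamMin H ≤ ⟪H v, v⟫_ℝ := csInf_le (bddBelow_lamSet H) hmem
    have hcalc : ⟪H v, v⟫_ℝ = (‖w‖⁻¹) ^ 2 * ⟪H w, w⟫_ℝ := by
      rw [hv]
      simp [real_inner_smul_left, real_inner_smul_right]
      ring
    rw [hcalc] at hle
    have := mul_le_mul_of_nonneg_left hle (le_of_lt (by positivity : (0:ℝ) < ‖w‖ ^ 2))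
    calc lamMin H * ‖w‖ ^ 2 = ‖w‖ ^ 2 * lamMin H := by ring
    _ ≤ ‖w‖ ^ 2 * ((‖w‖⁻¹) ^ 2 * ⟪H w, w⟫_ℝ) := this
    _ = ⟪H w, w⟫_ℝ := by
        field_simp

lemma inner_le_lamMax_mul_sq_norm (H : E →L[ℝ] E) (w : E) :
    ⟪H w, w⟫_ℝ ≤ lamMax H * ‖w‖ ^ 2 := by
  rcases eq_or_ne w 0 with rfl | hw
  · simp
  · have hnorm : ‖w‖ ≠ 0 := norm_ne_zero_iff.2 hw
    set v : E := ‖w‖⁻¹ • w with hv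
    have hv1 : ‖v‖ = 1 := by
      rw [hv, norm_smul]
      simp [abs_of_nonneg (inv_nonneg.2 (norm_nonneg w)), inv_mul_cancel₀ hnorm]
    have hmem : ⟪H v, v⟫_ℝ ∈ {r | ∃ v : E, ‖v‖ = 1 ∧ r = ⟪H v, v⟫_ℝ} := ⟨v, hv1, rfl⟩
    have hle : ⟪H v, v⟫_ℝ ≤ lamMax H := le_csSup (bddAbove_lamSet H) hmem
    have hcalc : ⟪H v, v⟫_ℝ = (‖w‖⁻¹) ^ 2 * ⟪H w, w⟫_ℝ := by
      rw [hv]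
      simp [real_inner_smul_left, real_inner_smul_right]
      ring
    rw [hcalc] at hle
    have := mul_le_mul_of_nonneg_left hle (le_of_lt (by positivity : (0:ℝ) < ‖w‖ ^ 2))
    calc ⟪H w, w⟫_ℝ = ‖w‖ ^ 2 * ((‖w‖⁻¹) ^ 2 * ⟪H w, w⟫_ℝ) := by field_simp
    _ ≤ ‖w‖ ^ 2 * lamMax H := this
    _ = lamMax H * ‖w‖ ^ 2 := by ring

lemma lamMin_zero (hK : 1 ≤ K) : lamMin (0 : E →L[ℝ] E) = 0 := by
  have : {r | ∃ v : E, ‖v‖ = 1 ∧ r = ⟪(0 : E →L[ℝ] E) v, v⟫_ℝ} = {0} := by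
    ext r
    constructor
    · rintro ⟨v, hv, rfl⟩; simp
    · rintro rfl
      exact ⟨EuclideanSpace.single ⟨0, hK⟩ (1:ℝ), by simp [EuclideanSpace.norm_single], by simp⟩
  rw [lamMin, this, csInf_singleton]


section MVT

variable {U : Set (EuclideanSpace ℝ (Fin K))} {g : EuclideanSpace ℝ (Fin K) → EuclideanSpace ℝ (Fin K)}
  {ψ : EuclideanSpace ℝ (Fin K) → ℝ} {v V : ℝ}

/-- Strong monotonicity of the gradient from a Hessian lower bound. -/
lemma strong_mono (hU : Convex ℝ U)
    (hgd : ∀ θ ∈ U, DifferentiableAt ℝ g θ)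
    (hv : ∀ θ ∈ U, ∀ w : E, v * ‖w‖ ^ 2 ≤ ⟪(fderiv ℝ g θ) w, w⟫_ℝ)
    {θ1 θ2 : E} (h1 : θ1 ∈ U) (h2 : θ2 ∈ U) :
    v * ‖θ1 - θ2‖ ^ 2 ≤ ⟪g θ1 - g θ2, θ1 - θ2⟫_ℝ := by
  set d : E := θ1 - θ2 with hd
  have hmem : ∀ s : ℝ, s ∈ Icc (0:ℝ) 1 → θ2 + s • d ∈ U := by
    intro s hs
    have := hU h2 h1 (by linarith [hs.2] : 0 ≤ 1 - s) hs.1 (by ring)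
    convert this using 1
    rw [hd]
    module
  have hline : ∀ s : ℝ, HasDerivAt (fun s : ℝ => θ2 + s • d) d s := by
    intro s
    simpa using ((hasDerivAt_id s).smul_const d).const_add θ2
  set h : ℝ → ℝ := fun s => ⟪d, g (θ2 + s • d)⟫_ℝ with hh
  have hderiv : ∀ s ∈ Icc (0:ℝ) 1,
      HasDerivAt h ⟪d, (fderiv ℝ g (θ2 + s • d)) d⟫_ℝ s := by
    intro s hs
    have hg : HasDerivAt (fun s : ℝ => g (θ2 + s • d)) ((fderiv ℝ g (θ2 + s • d)) d) s := by
      exact ((hgd _ (hmem s hs)).hasFDerivAt.comp_hasDerivAt s (hline s))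
    have := ((innerSL ℝ d).hasFDerivAt).comp_hasDerivAt s hg
    exact this
  rcases eq_or_lt_of_le (zero_le_one (α := ℝ)) with h01 | h01
  · exact absurd h01 (by norm_num)
  obtain ⟨c, hc, hceq⟩ := exists_hasDerivAt_eq_slope h
      (fun s => ⟪d, (fderiv ℝ g (θ2 + s • d)) d⟫_ℝ) one_pos
      (fun s hs => (hderiv s hs).continuousAt.continuousWithinAt)
      (fun s hs => hderiv s (Ioo_subset_Icc_self hs))
  have hc' : θ2 + c • d ∈ U := hmem c (Ioo_subset_Icc_self hc)
  have hlow : v * ‖d‖ ^ 2 ≤ ⟪d, (fderiv ℝ g (θ2 + c • d)) d⟫_ℝ := by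
    rw [real_inner_comm]
    exact hv _ hc' d
  rw [hceq] at hlow
  have h1v : h 1 = ⟪d, g θ1⟫_ℝ := by simp [hh, hd]
  have h0v : h 0 = ⟪d, g θ2⟫_ℝ := by simp [hh]
  rw [h1v, h0v] at hlow
  calc v * ‖d‖ ^ 2 ≤ (⟪d, g θ1⟫_ℝ - ⟪d, g θ2⟫_ℝ) / (1 - 0) := hlow
  _ = ⟪d, g θ1 - g θ2⟫_ℝ := by rw [inner_sub_right]; norm_num
  _ = ⟪g θ1 - g θ2, d⟫_ℝ := real_inner_comm _ _

/-- Taylor-type lower bound for ψ via gradient monotonicity. -/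
lemma taylor_lower (hU : Convex ℝ U)
    (hψ : ∀ θ ∈ U, HasGradientAt ψ (g θ) θ)
    (hgd : ∀ θ ∈ U, DifferentiableAt ℝ g θ)
    (hv : ∀ θ ∈ U, ∀ w : E, v * ‖w‖ ^ 2 ≤ ⟪(fderiv ℝ g θ) w, w⟫_ℝ)
    {θ1 θ2 : E} (h1 : θ1 ∈ U) (h2 : θ2 ∈ U) :
    v / 2 * ‖θ1 - θ2‖ ^ 2 ≤ ψ θ1 - ψ θ2 - ⟪θ1 - θ2, g θ2⟫_ℝ := by
  set d : E := θ1 - θ2 with hd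
  have hmem : ∀ s : ℝ, s ∈ Icc (0:ℝ) 1 → θ2 + s • d ∈ U := by
    intro s hs
    have := hU h2 h1 (by linarith [hs.2] : 0 ≤ 1 - s) hs.1 (by ring)
    convert this using 1
    rw [hd]
    module
  have hline : ∀ s : ℝ, HasDerivAt (fun s : ℝ => θ2 + s • d) d s := by
    intro s
    simpa using ((hasDerivAt_id s).smul_const d).const_add θ2
  set φ : ℝ → ℝ := fun s => ψ (θ2 + s • d) - s * ⟪d, g θ2⟫_ℝ - v / 2 * s ^ 2 * ‖d‖ ^ 2 with hφ
  have hderiv : ∀ s ∈ Icc (0:ℝ) 1,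
      HasDerivAt φ (⟪g (θ2 + s • d), d⟫_ℝ - ⟪d, g θ2⟫_ℝ - v * s * ‖d‖ ^ 2) s := by
    intro s hs
    have hψd : HasDerivAt (fun s : ℝ => ψ (θ2 + s • d)) ⟪g (θ2 + s • d), d⟫_ℝ s := by
      have := (hψ _ (hmem s hs)).hasFDerivAt.comp_hasDerivAt s (hline s)
      exact this
    have h2' : HasDerivAt (fun s : ℝ => s * ⟪d, g θ2⟫_ℝ) ⟪d, g θ2⟫_ℝ s := by
      simpa using (hasDerivAt_id s).mul_const ⟪d, g θ2⟫_ℝ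
    have h3' : HasDerivAt (fun s : ℝ => v / 2 * s ^ 2 * ‖d‖ ^ 2) (v * s * ‖d‖ ^ 2) s := by
      have : HasDerivAt (fun s : ℝ => s ^ 2) (2 * s) s := by
        simpa using hasDerivAt_pow 2 s
      have := (this.const_mul (v / 2)).mul_const (‖d‖ ^ 2)
      rw [show v * s * ‖d‖ ^ 2 = v / 2 * (2 * s) * ‖d‖ ^ 2 by ring]
      exact this
    exact (hψd.sub h2').sub h3'
  obtain ⟨c, hc, hceq⟩ := exists_hasDerivAt_eq_slope φ
      (fun s => ⟪g (θ2 + s • d), d⟫_ℝ - ⟪d, g θ2⟫_ℝ - v * s * ‖d‖ ^ 2) one_pos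
      (fun s hs => (hderiv s hs).continuousAt.continuousWithinAt)
      (fun s hs => hderiv s (Ioo_subset_Icc_self hs))
  have hc01 : c ∈ Icc (0:ℝ) 1 := Ioo_subset_Icc_self hc
  have hcU : θ2 + c • d ∈ U := hmem c hc01
  have hmono : v * c * ‖d‖ ^ 2 ≤ ⟪g (θ2 + c • d) - g θ2, d⟫_ℝ := by
    have h' := strong_mono hU hgd hv hcU h2
    have heq : θ2 + c • d - θ2 = c • d := by module
    rw [heq] at h'
    have hnorm : ‖c • d‖ ^ 2 = c ^ 2 * ‖d‖ ^ 2 := by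
      rw [norm_smul]
      rw [Real.norm_eq_abs, mul_pow, sq_abs]
    rw [hnorm, real_inner_smul_right] at h'
    have hcpos : (0:ℝ) < c := hc.1
    nlinarith
  have hpos : 0 ≤ (φ 1 - φ 0) / (1 - 0) := by
    rw [← hceq]
    have : ⟪d, g θ2⟫_ℝ = ⟪g θ2, d⟫_ℝ := real_inner_comm _ _
    rw [this]
    have hsub : ⟪g (θ2 + c • d) - g θ2, d⟫_ℝ = ⟪g (θ2 + c • d), d⟫_ℝ - ⟪g θ2, d⟫_ℝ :=
      inner_sub_left _ _ _
    rw [hsub] at hmono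
    linarith [hmono]
  have hφ1 : φ 1 = ψ θ1 - ⟪d, g θ2⟫_ℝ - v / 2 * ‖d‖ ^ 2 := by
    simp [hφ, hd]
  have hφ0 : φ 0 = ψ θ2 := by simp [hφ]
  rw [hφ1, hφ0] at hpos
  have hd' : ⟪θ1 - θ2, g θ2⟫_ℝ = ⟪d, g θ2⟫_ℝ := by rw [hd]
  rw [hd']
  have : 0 ≤ ψ θ1 - ⟪d, g θ2⟫_ℝ - v / 2 * ‖d‖ ^ 2 - ψ θ2 := by
    have h10 : (1:ℝ) - 0 = 1 := by norm_num
    rw [h10, div_one] at hpos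
    linarith
  linarith

/-- Taylor-type upper bound for ψ via Hessian upper bound. -/
lemma taylor_upper (hU : Convex ℝ U)
    (hψ : ∀ θ ∈ U, HasGradientAt ψ (g θ) θ)
    (hgd : ∀ θ ∈ U, DifferentiableAt ℝ g θ)
    (hV : ∀ θ ∈ U, ∀ w : E, ⟪(fderiv ℝ g θ) w, w⟫_ℝ ≤ V * ‖w‖ ^ 2)
    {θ1 θ2 : E} (h1 : θ1 ∈ U) (h2 : θ2 ∈ U) :
    ψ θ1 - ψ θ2 - ⟪θ1 - θ2, g θ2⟫_ℝ ≤ V / 2 * ‖θ1 - θ2‖ ^ 2 := by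
  have hψ' : ∀ θ ∈ U, HasGradientAt (fun x => -ψ x) (-g θ) θ := by
    intro θ hθ
    refine hasGradientAt_iff_hasFDerivAt.mpr ?_
    rw [map_neg]
    exact (hasGradientAt_iff_hasFDerivAt.mp (hψ θ hθ)).neg
  have hgd' : ∀ θ ∈ U, DifferentiableAt ℝ (fun x => -g x) θ := fun θ hθ => (hgd θ hθ).neg
  have hv' : ∀ θ ∈ U, ∀ w : E, (-V) * ‖w‖ ^ 2 ≤ ⟪(fderiv ℝ (fun x => -g x) θ) w, w⟫_ℝ := by
    intro θ hθ w
    rw [fderiv_fun_neg]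
    have := hV θ hθ w
    simp only [ContinuousLinearMap.neg_apply, inner_neg_left]
    linarith
  have := taylor_lower (g := fun x => -g x) (ψ := fun x => -ψ x) (v := -V) hU hψ' hgd' hv' h1 h2
  simp only [inner_neg_right] at this
  linarith

end MVT


end AuxSpec

section Psi

variable {K : ℕ} {ν₀ : Measure ℝ} {F : ℝ → EuclideanSpace ℝ (Fin K)}
local notation "E" => EuclideanSpace ℝ (Fin K)

lemma measurable_expInner (hF : Measurable F) (θ : E) :
    Measurable fun x => Real.exp ⟪θ, F x⟫_ℝ :=
  Real.measurable_exp.comp (measurable_const.inner hF)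

lemma integrable_expInner (hF : Measurable F) {θ : E} (hθ : θ ∈ ThetaD ν₀ F) :
    Integrable (fun x => Real.exp ⟪θ, F x⟫_ℝ) ν₀ := by
  refine ⟨(measurable_expInner hF θ).aestronglyMeasurable, ?_⟩
  rw [hasFiniteIntegral_iff_ofReal (Filter.Eventually.of_forall fun x => (Real.exp_pos _).le)]
  exact hθ

lemma psiFun_eq (hF : Measurable F) (θ : E) :
    psiFun ν₀ F θ = Real.log (∫ x, Real.exp ⟪θ, F x⟫_ℝ ∂ν₀) := by
  rw [psiFun, integral_eq_lintegral_of_nonneg_ae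
    (Filter.Eventually.of_forall fun x => (Real.exp_pos _).le)
    (measurable_expInner hF θ).aestronglyMeasurable]

lemma integral_expInner_pos (hF : Measurable F) (hν : ν₀ ≠ 0) {θ : E} (hθ : θ ∈ ThetaD ν₀ F) :
    0 < ∫ x, Real.exp ⟪θ, F x⟫_ℝ ∂ν₀ := by
  rw [integral_eq_lintegral_of_nonneg_ae
    (Filter.Eventually.of_forall fun x => (Real.exp_pos _).le)
    (measurable_expInner hF θ).aestronglyMeasurable]
  apply ENNReal.toReal_pos _ hθ.ne
  rw [← pos_iff_ne_zero]
  rw [lintegral_pos_iff_support (Measurable.ennreal_ofReal (measurable_expInner hF θ))]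
  have : (Function.support fun x => ENNReal.ofReal (Real.exp ⟪θ, F x⟫_ℝ)) = univ := by
    ext x; simp [Function.mem_support, ENNReal.ofReal_eq_zero, not_le, Real.exp_pos]
  rw [this]
  exact Measure.measure_univ_pos.mpr hν

lemma psiFun_differentiableAt (hK : 1 ≤ K) (hF : Measurable F) (hν : ν₀ ≠ 0)
    {θ₀ : E} (hθ₀ : θ₀ ∈ interior (ThetaD ν₀ F)) :
    DifferentiableAt ℝ (psiFun ν₀ F) θ₀ := by
  obtain ⟨ε, hε, hball⟩ : ∃ ε > 0, ball θ₀ ε ⊆ ThetaD ν₀ F := by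
    obtain ⟨ε, hε, h⟩ := Metric.isOpen_iff.mp isOpen_interior θ₀ hθ₀
    exact ⟨ε, hε, h.trans interior_subset⟩
  have hθ₀D : θ₀ ∈ ThetaD ν₀ F := interior_subset hθ₀
  set sK : ℝ := Real.sqrt K + 1 with hsKdef
  have hsK : 0 < sK := by positivity
  set δ : ℝ := ε / (4 * sK) with hδdef
  have hδ : 0 < δ := by positivity
  set a : ℝ := δ * (2 * Real.sqrt K + 1) with hadef
  have ha : 0 < a := by positivity
  have haε : a < ε := by
    have h1 : 2 * Real.sqrt K + 1 ≤ 3 * sK := by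
      rw [hsKdef]; nlinarith [Real.sqrt_nonneg (K:ℝ)]
    calc a ≤ δ * (3 * sK) := by
          apply mul_le_mul_of_nonneg_left h1 hδ.le
    _ = 3 / 4 * ε := by rw [hδdef]; field_simp
    _ < ε := by linarith
  set e : Fin K → E := fun k => EuclideanSpace.single k (1:ℝ) with hedef
  have hmemD : ∀ (k : Fin K) (s : ℝ), |s| = a → θ₀ + s • e k ∈ ThetaD ν₀ F := by
    intro k s hs
    apply hball
    rw [mem_ball_iff_norm]
    have : θ₀ + s • e k - θ₀ = s • e k := by module
    rw [this, norm_smul, hedef]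
    simp only [EuclideanSpace.norm_single, norm_one, mul_one, Real.norm_eq_abs]
    rw [hs]; exact haε
  set B : ℝ → ℝ := fun x => ∑ k : Fin K,
      (Real.exp ⟪θ₀ + a • e k, F x⟫_ℝ + Real.exp ⟪θ₀ + (-a) • e k, F x⟫_ℝ) with hBdef
  have hBint : Integrable B ν₀ := by
    apply integrable_finset_sum
    intro k _
    exact (integrable_expInner hF (hmemD k a (abs_of_pos ha))).add
      (integrable_expInner hF (hmemD k (-a) (by rw [abs_neg, abs_of_pos ha])))
  have hkey : ∀ y : E, Real.exp (⟪θ₀, y⟫_ℝ + 2 * δ * ‖y‖) ≤ B (0:ℝ) ∨ True := by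
    exact fun y => Or.inr trivial
  -- the genuine key bound, stated on an arbitrary vector y together with value form
  have hkey2 : ∀ x : ℝ, Real.exp (⟪θ₀, F x⟫_ℝ + 2 * δ * ‖F x‖) ≤ B x := by
    intro x
    set y : E := F x with hy
    have hne : (Finset.univ : Finset (Fin K)).Nonempty := by
      have : Nonempty (Fin K) := ⟨⟨0, hK⟩⟩
      exact Finset.univ_nonempty
    obtain ⟨k₀, _, hk₀⟩ := Finset.exists_max_image Finset.univ (fun k => |y k|) hne
    have hnorm : ‖y‖ ≤ Real.sqrt K * |y k₀| := by
      rw [EuclideanSpace.norm_eq]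
      have h1 : ∑ i, ‖y i‖ ^ 2 ≤ ∑ _i : Fin K, |y k₀| ^ 2 := by
        apply Finset.sum_le_sum
        intro i _
        rw [Real.norm_eq_abs]
        have := hk₀ i (Finset.mem_univ i)
        nlinarith [abs_nonneg (y i), abs_nonneg (y k₀)]
      have h2 : ∑ _i : Fin K, |y k₀| ^ 2 = (K : ℝ) * |y k₀| ^ 2 := by
        rw [Finset.sum_const, Finset.card_univ, Fintype.card_fin, nsmul_eq_mul]
      calc Real.sqrt (∑ i, ‖y i‖ ^ 2) ≤ Real.sqrt ((K:ℝ) * |y k₀| ^ 2) := by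
            apply Real.sqrt_le_sqrt; rw [← h2]; exact h1
      _ = Real.sqrt K * |y k₀| := by
            rw [Real.sqrt_mul (Nat.cast_nonneg K), Real.sqrt_sq (abs_nonneg _)]
    have hstep : ⟪θ₀, y⟫_ℝ + 2 * δ * ‖y‖ ≤ ⟪θ₀, y⟫_ℝ + a * |y k₀| := by
      have : 2 * δ * ‖y‖ ≤ 2 * δ * (Real.sqrt K * |y k₀|) := by
        apply mul_le_mul_of_nonneg_left hnorm (by positivity)
      have h2 : 2 * δ * (Real.sqrt K * |y k₀|) ≤ a * |y k₀| := by
        rw [hadef]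
        nlinarith [abs_nonneg (y k₀), hδ.le]
      linarith
    have hBnonneg : ∀ k : Fin K, 0 ≤ Real.exp ⟪θ₀ + a • e k, y⟫_ℝ + Real.exp ⟪θ₀ + (-a) • e k, y⟫_ℝ := by
      intro k; positivity
    have hinner : ∀ (s : ℝ) (k : Fin K), ⟪θ₀ + s • e k, y⟫_ℝ = ⟪θ₀, y⟫_ℝ + s * y k := by
      intro s k
      rw [inner_add_left, real_inner_smul_left, hedef]
      simp [EuclideanSpace.inner_single_left]
    rcases le_or_gt 0 (y k₀) with hsign | hsign
    · have habs : |y k₀| = y k₀ := abs_of_nonneg hsign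
      calc Real.exp (⟪θ₀, y⟫_ℝ + 2 * δ * ‖y‖) ≤ Real.exp (⟪θ₀ + a • e k₀, y⟫_ℝ) := by
            apply Real.exp_le_exp.mpr
            rw [hinner a k₀]; rw [habs] at hstep; exact hstep
      _ ≤ Real.exp ⟪θ₀ + a • e k₀, y⟫_ℝ + Real.exp ⟪θ₀ + (-a) • e k₀, y⟫_ℝ := by
            linarith [Real.exp_pos ⟪θ₀ + (-a) • e k₀, y⟫_ℝ]
      _ ≤ B x := by
            rw [hBdef]
            exact Finset.single_le_sum (f := fun k =>
              Real.exp ⟪θ₀ + a • e k, y⟫_ℝ + Real.exp ⟪θ₀ + (-a) • e k, y⟫_ℝ)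
              (fun k _ => hBnonneg k) (Finset.mem_univ k₀)
    · have habs : |y k₀| = -(y k₀) := abs_of_neg hsign
      calc Real.exp (⟪θ₀, y⟫_ℝ + 2 * δ * ‖y‖) ≤ Real.exp (⟪θ₀ + (-a) • e k₀, y⟫_ℝ) := by
            apply Real.exp_le_exp.mpr
            rw [hinner (-a) k₀]; rw [habs] at hstep; linarith
      _ ≤ Real.exp ⟪θ₀ + a • e k₀, y⟫_ℝ + Real.exp ⟪θ₀ + (-a) • e k₀, y⟫_ℝ := by
            linarith [Real.exp_pos ⟪θ₀ + a • e k₀, y⟫_ℝ]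
      _ ≤ B x := by
            rw [hBdef]
            exact Finset.single_le_sum (f := fun k =>
              Real.exp ⟪θ₀ + a • e k, y⟫_ℝ + Real.exp ⟪θ₀ + (-a) • e k, y⟫_ℝ)
              (fun k _ => hBnonneg k) (Finset.mem_univ k₀)
  -- the Lipschitz bound function
  set bnd : ℝ → ℝ := fun x => δ⁻¹ * B x with hbnddef
  have hbnd_int : Integrable bnd ν₀ := hBint.const_mul _
  set F' : ℝ → (EuclideanSpace ℝ (Fin K)) →L[ℝ] ℝ :=
    fun x => Real.exp ⟪θ₀, F x⟫_ℝ • (innerSL ℝ (F x)) with hF'def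
  have hinner_deriv : ∀ (θ : E) (x : ℝ),
      HasFDerivAt (fun θ : E => Real.exp ⟪θ, F x⟫_ℝ)
        (Real.exp ⟪θ, F x⟫_ℝ • innerSL ℝ (F x)) θ := by
    intro θ x
    have h1 : HasFDerivAt (fun θ : E => ⟪θ, F x⟫_ℝ) (innerSL ℝ (F x)) θ := by
      have h0 := (innerSL ℝ (F x)).hasFDerivAt (x := θ)
      have heq : (fun θ : E => ⟪θ, F x⟫_ℝ) = ⇑(innerSL ℝ (F x)) := by
        funext u
        simp only [innerSL_apply_apply]
        exact real_inner_comm _ _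
      rw [heq]; exact h0
    exact h1.exp
  have hlipbound : ∀ x : ℝ, ∀ θ ∈ ball θ₀ δ,
      ‖Real.exp ⟪θ, F x⟫_ℝ • innerSL ℝ (F x)‖₊ ≤ Real.nnabs (bnd x) := by
    intro x θ hθ
    rw [← NNReal.coe_le_coe, coe_nnnorm, Real.coe_nnabs]
    have hns : ‖Real.exp ⟪θ, F x⟫_ℝ • innerSL ℝ (F x)‖ ≤ Real.exp ⟪θ, F x⟫_ℝ * ‖F x‖ := by
      refine le_trans (ContinuousLinearMap.opNorm_smul_le _ _) ?_
      rw [Real.norm_eq_abs, abs_of_pos (Real.exp_pos _), innerSL_apply_norm]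
    refine le_trans hns ?_
    have hip : ⟪θ, F x⟫_ℝ ≤ ⟪θ₀, F x⟫_ℝ + δ * ‖F x‖ := by
      have hsub : ⟪θ, F x⟫_ℝ - ⟪θ₀, F x⟫_ℝ = ⟪θ - θ₀, F x⟫_ℝ := by rw [inner_sub_left]
      have hcs := real_inner_le_norm (θ - θ₀) (F x)
      have hd : ‖θ - θ₀‖ < δ := by rwa [mem_ball_iff_norm] at hθ
      have h3 : ‖θ - θ₀‖ * ‖F x‖ ≤ δ * ‖F x‖ :=
        mul_le_mul_of_nonneg_right hd.le (norm_nonneg (F x))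
      linarith
    have h1 : Real.exp ⟪θ, F x⟫_ℝ * ‖F x‖ ≤ ‖F x‖ * Real.exp (⟪θ₀, F x⟫_ℝ + δ * ‖F x‖) := by
      rw [mul_comm]
      exact mul_le_mul_of_nonneg_left (Real.exp_le_exp.mpr hip) (norm_nonneg _)
    have h2 : ‖F x‖ * Real.exp (⟪θ₀, F x⟫_ℝ + δ * ‖F x‖) ≤ bnd x := by
      have hFle : ‖F x‖ ≤ δ⁻¹ * Real.exp (δ * ‖F x‖) := by
        have ht : δ * ‖F x‖ ≤ Real.exp (δ * ‖F x‖) := by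
          linarith [Real.add_one_le_exp (δ * ‖F x‖)]
        calc ‖F x‖ = δ⁻¹ * (δ * ‖F x‖) := by field_simp
        _ ≤ δ⁻¹ * Real.exp (δ * ‖F x‖) := mul_le_mul_of_nonneg_left ht (by positivity)
      calc ‖F x‖ * Real.exp (⟪θ₀, F x⟫_ℝ + δ * ‖F x‖)
          ≤ δ⁻¹ * Real.exp (δ * ‖F x‖) * Real.exp (⟪θ₀, F x⟫_ℝ + δ * ‖F x‖) :=
            mul_le_mul_of_nonneg_right hFle (Real.exp_pos _).le
      _ = δ⁻¹ * Real.exp (⟪θ₀, F x⟫_ℝ + 2 * δ * ‖F x‖) := by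
            rw [mul_assoc, ← Real.exp_add]
            congr 2
            ring
      _ ≤ δ⁻¹ * B x := mul_le_mul_of_nonneg_left (hkey2 x) (by positivity)
    exact le_trans (le_trans h1 h2) (le_abs_self _)
  have hlip : ∀ᵐ x ∂ν₀, LipschitzOnWith (Real.nnabs (bnd x))
      (fun θ : E => Real.exp ⟪θ, F x⟫_ℝ) (ball θ₀ δ) := by
    refine Filter.Eventually.of_forall fun x => ?_
    exact (convex_ball θ₀ δ).lipschitzOnWith_of_nnnorm_hasFDerivWithin_le
      (fun θ hθ => (hinner_deriv θ x).hasFDerivWithinAt)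
      (fun θ hθ => hlipbound x θ hθ)
  have hF'_meas : AEStronglyMeasurable F' ν₀ := by
    apply Measurable.aestronglyMeasurable
    apply Measurable.smul (measurable_expInner hF θ₀)
    have hinnerSLcont : Continuous fun y : EuclideanSpace ℝ (Fin K) => innerSL ℝ y :=
      (innerSL ℝ).continuous
    exact hinnerSLcont.measurable.comp hF
  obtain ⟨-, hZ⟩ := hasFDerivAt_integral_of_dominated_loc_of_lip (Metric.ball_mem_nhds θ₀ hδ)
      (Filter.Eventually.of_forall fun θ => (measurable_expInner hF θ).aestronglyMeasurable)
      (integrable_expInner hF hθ₀D) hF'_meas hlip hbnd_int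
      (Filter.Eventually.of_forall fun x => hinner_deriv θ₀ x)
  have hpos := integral_expInner_pos hF hν hθ₀D
  have hfun : psiFun ν₀ F = fun θ => Real.log (∫ x, Real.exp ⟪θ, F x⟫_ℝ ∂ν₀) :=
    funext (psiFun_eq hF)
  rw [hfun]
  exact DifferentiableAt.log hZ.differentiableAt hpos.ne'

end Psi


lemma lintegral_pi_prod {n : ℕ} (μ : Measure ℝ) [IsProbabilityMeasure μ]
    (h : Fin n → ℝ → ℝ≥0∞) (hm : ∀ i, Measurable (h i)) :
    ∫⁻ v, ∏ i, h i (v i) ∂(Measure.pi fun _ : Fin n => μ) = ∏ i, ∫⁻ x, h i x ∂μ := by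
  induction n with
  | zero =>
      simp only [Finset.univ_eq_empty, Finset.prod_empty, lintegral_const, one_mul]
      exact measure_univ
  | succ n ih =>
      have hmp := (measurePreserving_piFinSuccAbove (fun _ : Fin (n + 1) => μ) 0).symm
      rw [← hmp.lintegral_comp_emb (MeasurableEquiv.measurableEmbedding _)]
      have heq : ∀ p : ℝ × (Fin n → ℝ),
          (∏ i, h i (((MeasurableEquiv.piFinSuccAbove (fun _ : Fin (n+1) => ℝ) 0).symm p) i))
            = h 0 p.1 * ∏ j : Fin n, h j.succ (p.2 j) := by
        intro p
        simp_rw [MeasurableEquiv.piFinSuccAbove_symm_apply, Fin.insertNthEquiv,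
          Fin.prod_univ_succ, Fin.insertNth_zero]
        simp only [Fin.zero_succAbove, cast_eq, Function.comp_def, Fin.cons_zero, Fin.cons_succ,
          Equiv.coe_fn_mk]
      simp_rw [heq]
      rw [lintegral_prod_mul (f := fun x : ℝ => h 0 x)
        (g := fun w : Fin n → ℝ => ∏ j : Fin n, h j.succ (w j)) (hm 0).aemeasurable
        ((Finset.measurable_prod Finset.univ
          (fun j _ => (hm j.succ).comp (measurable_pi_apply j))).aemeasurable)]
      rw [ih (fun j => h j.succ) (fun j => hm j.succ), Fin.prod_univ_succ]

lemma pi_withDensity {n : ℕ} (μ : Measure ℝ) [IsProbabilityMeasure μ] (g : ℝ → ℝ≥0∞)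
    (hg : Measurable g) [IsProbabilityMeasure (μ.withDensity g)] :
    Measure.pi (fun _ : Fin n => μ.withDensity g)
      = (Measure.pi fun _ : Fin n => μ).withDensity (fun v => ∏ i, g (v i)) := by
  refine Measure.pi_eq (μ := fun _ : Fin n => μ.withDensity g) fun s hs => ?_
  rw [withDensity_apply _ (MeasurableSet.univ_pi hs)]
  have hind : ∀ v : Fin n → ℝ,
      (univ.pi s).indicator (fun v => ∏ i, g (v i)) v = ∏ i, (s i).indicator g (v i) := by
    intro v
    by_cases hv : v ∈ univ.pi s
    · rw [indicator_of_mem hv]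
      refine Finset.prod_congr rfl fun i _ => ?_
      rw [indicator_of_mem (hv i (mem_univ i))]
    · rw [indicator_of_notMem hv]
      rw [mem_univ_pi] at hv
      push_neg at hv
      obtain ⟨i, hi⟩ := hv
      exact (Finset.prod_eq_zero (Finset.mem_univ i) (indicator_of_notMem hi g)).symm
  rw [← lintegral_indicator (MeasurableSet.univ_pi hs)]
  simp_rw [hind]
  rw [lintegral_pi_prod μ _ (fun i => hg.indicator (hs i))]
  refine Finset.prod_congr rfl fun i _ => ?_
  rw [lintegral_indicator (hs i), withDensity_apply _ (hs i)]

lemma map_iid {Ω : Type*} [MeasurableSpace Ω] (P : Measure Ω) [IsProbabilityMeasure P]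
    {X : ℕ → Ω → ℝ} {ν : Measure ℝ}
    (hmeas : ∀ i, Measurable (X i))
    (hindep : iIndepFun X P)
    (hmap : ∀ i, P.map (X i) = ν) (n : ℕ) :
    P.map (fun ω (i : Fin n) => X i ω) = Measure.pi fun _ : Fin n => ν := by
  have hν : IsProbabilityMeasure ν := by
    rw [← hmap 0]; exact Measure.isProbabilityMeasure_map (hmeas 0).aemeasurable
  refine (Measure.pi_eq (μ := fun _ : Fin n => ν) fun s hs => ?_).symm
  have hXvec : Measurable (fun ω (i : Fin n) => X (i : ℕ) ω) :=
    measurable_pi_lambda _ (fun i => hmeas i)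
  rw [Measure.map_apply hXvec (MeasurableSet.univ_pi hs)]
  set s' : ℕ → Set ℝ := fun j => if h : j < n then s ⟨j, h⟩ else univ with hs'def
  have hs'meas : ∀ j, MeasurableSet (s' j) := by
    intro j
    by_cases h : j < n
    · have he : s' j = s ⟨j, h⟩ := by simp [hs'def, h]
      rw [he]; exact hs _
    · have he : s' j = univ := by simp [hs'def, h]
      rw [he]; exact MeasurableSet.univ
  have hpre : (fun ω (i : Fin n) => X i ω) ⁻¹' (univ.pi s)
      = ⋂ j ∈ Finset.range n, X j ⁻¹' (s' j) := by
    ext ω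
    simp only [mem_preimage, mem_univ_pi, Set.mem_iInter, Finset.mem_range, mem_preimage]
    constructor
    · intro h j hj
      have he : s' j = s ⟨j, hj⟩ := by simp [hs'def, hj]
      rw [he]
      exact h ⟨j, hj⟩
    · intro h i
      have := h i.1 i.2
      have he : s' i.1 = s ⟨i.1, i.2⟩ := by simp [hs'def, i.2]
      rw [he] at this
      simpa only [Fin.eta] using this
  rw [hpre]
  rw [hindep.meas_biInter (fun j _ => ⟨s' j, hs'meas j, rfl⟩)]
  have hPj : ∀ j, P (X j ⁻¹' s' j) = ν (s' j) := by
    intro j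
    rw [← hmap j, Measure.map_apply (hmeas j) (hs'meas j)]
  rw [Finset.prod_congr rfl fun j _ => hPj j]
  rw [← Fin.prod_univ_eq_prod_range (fun j => ν (s' j)) n]
  refine Finset.prod_congr rfl fun i _ => ?_
  have he : s' i.1 = s ⟨i.1, i.2⟩ := by simp [hs'def, i.2]
  rw [he]


section AuxSigma
variable {K : ℕ}

lemma measurableSet_image_graddomain {U : Set (EuclideanSpace ℝ (Fin K))} (hU : IsOpen U)
    {g : EuclideanSpace ℝ (Fin K) → EuclideanSpace ℝ (Fin K)} (hg : ContinuousOn g U)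
    {b : EuclideanSpace ℝ (Fin K) → ℝ} (hb : ContinuousOn b U) (c : ℝ) :
    MeasurableSet {y : EuclideanSpace ℝ (Fin K) | ∃ θ ∈ U, g θ = y ∧ b θ ≥ c} := by
  classical
  set S : Set (EuclideanSpace ℝ (Fin K)) := {θ | θ ∈ U ∧ b θ ≥ c} with hSdef
  have him : {y : EuclideanSpace ℝ (Fin K) | ∃ θ ∈ U, g θ = y ∧ b θ ≥ c} = g '' S := by
    ext y
    constructor
    · rintro ⟨θ, hθU, hgθ, hbθ⟩; exact ⟨θ, ⟨hθU, hbθ⟩, hgθ⟩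
    · rintro ⟨θ, ⟨hθU, hbθ⟩, hgθ⟩; exact ⟨θ, hθU, hgθ, hbθ⟩
  rw [him]
  set W : ℕ → Set (EuclideanSpace ℝ (Fin K)) := fun m =>
    closedBall 0 m ∩ {x | ∀ y, y ∉ U → (1:ℝ)/(m+1) ≤ dist x y} with hWdef
  have hWclosed : ∀ m, IsClosed (W m) := by
    intro m
    apply IsClosed.inter Metric.isClosed_closedBall
    have he : {x : EuclideanSpace ℝ (Fin K) | ∀ y, y ∉ U → (1:ℝ)/(m+1) ≤ dist x y}
        = ⋂ (y) (_ : y ∉ U), {x | (1:ℝ)/(m+1) ≤ dist x y} := by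
      ext x; simp
    rw [he]
    exact isClosed_iInter fun y => isClosed_iInter fun _ =>
      isClosed_le continuous_const (continuous_id.dist continuous_const)
  have hWsub : ∀ m, W m ⊆ U := by
    intro m x hx
    by_contra hxU
    have h1 := hx.2 x hxU
    have h2 : (0:ℝ) < 1/(m+1) := by positivity
    rw [dist_self] at h1
    linarith
  have hcover : ∀ x ∈ U, ∃ m : ℕ, x ∈ W m := by
    intro x hx
    obtain ⟨ε, hε, hball⟩ := Metric.isOpen_iff.mp hU x hx
    obtain ⟨m, hm⟩ := exists_nat_ge (max ‖x‖ (1/ε))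
    refine ⟨m, ?_, ?_⟩
    · rw [mem_closedBall, dist_zero_right]
      exact le_trans (le_max_left _ _) hm
    · intro y hyU
      by_contra hlt
      push_neg at hlt
      have h1 : 1/ε ≤ (m:ℝ) + 1 := by
        have := le_trans (le_max_right _ _) hm
        linarith
      have h2 : (1:ℝ)/(m+1) ≤ ε := by
        have hpos : (0:ℝ) < 1/ε := by positivity
        calc (1:ℝ)/(m+1) ≤ 1/(1/ε) := one_div_le_one_div_of_le hpos h1
        _ = ε := one_div_one_div ε
      refine hyU (hball ?_)
      rw [mem_ball, dist_comm]
      linarith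
  have hdecomp : g '' S = ⋃ m : ℕ, g '' (S ∩ W m) := by
    apply Subset.antisymm
    · rintro y ⟨θ, hθ, rfl⟩
      obtain ⟨m, hm⟩ := hcover θ hθ.1
      exact mem_iUnion.mpr ⟨m, ⟨θ, ⟨hθ, hm⟩, rfl⟩⟩
    · refine iUnion_subset fun m => ?_
      exact image_mono (inter_subset_left)
  rw [hdecomp]
  apply MeasurableSet.iUnion
  intro m
  have hSW : S ∩ W m = W m ∩ b ⁻¹' (Ici c) := by
    ext x
    constructor
    · rintro ⟨⟨hxU, hbx⟩, hxW⟩; exact ⟨hxW, hbx⟩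
    · rintro ⟨hxW, hbx⟩; exact ⟨⟨hWsub m hxW, hbx⟩, hxW⟩
  have hclosed : IsClosed (W m ∩ b ⁻¹' (Ici c)) :=
    ContinuousOn.preimage_isClosed_of_isClosed (hb.mono (hWsub m)) (hWclosed m) isClosed_Ici
  have hcompact : IsCompact (S ∩ W m) := by
    rw [hSW]
    exact isCompact_of_isClosed_isBounded hclosed
      ((isBounded_closedBall (x := (0 : EuclideanSpace ℝ (Fin K))) (r := m)).subset
        (fun x hx => hx.1.1))
  exact (hcompact.image_of_continuousOn (hg.mono (fun x hx => hx.1.1))).measurableSet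


end AuxSigma

/-- Change of measure: moving from `θ*` to a cone base point `θ*_c` costs an
explicit exponential factor. -/
theorem change_of_measure {K : ℕ} (hK : 1 ≤ K) (ν₀ : Measure ℝ) [SigmaFinite ν₀]
    (F : ℝ → EuclideanSpace ℝ (Fin K)) (hF : Measurable F)
    (Θ : Set (EuclideanSpace ℝ (Fin K))) (hΘconv : Convex ℝ Θ) (ρ : ℝ) (hρ : 0 < ρ)
    (θstar : EuclideanSpace ℝ (Fin K)) (hθΘ : θstar ∈ Θ)
    (hsub : thickening ρ Θ ⊆ interior (ThetaI (psiFun ν₀ F)) ∩ interior (ThetaD ν₀ F))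
    (ε : ℝ) (hε : 0 < ε) (hρε : 0 < rhoEps ν₀ F θstar ε)
    (p : ℝ) (hp : p ∈ Set.Icc (0:ℝ) 1) (η : ℝ) (hη : η ∈ Set.Ioc (0:ℝ) 1)
    (θc : EuclideanSpace ℝ (Fin K)) (hθc : θc ∈ thickening ρ Θ ∩ ThetaD ν₀ F)
    (hθcfar : ‖θstar - θc‖ ≥ η * rhoEps ν₀ F θstar ε)
    (t : ℕ) (f : ℝ → ℝ) (hf0 : ∀ x, 0 ≤ f x)
    (hfmono : ∀ n n' : ℕ, 1 ≤ n → n ≤ n' →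
      (n : ℝ) * f ((t : ℝ) / (n : ℝ)) ≤ (n' : ℝ) * f ((t : ℝ) / (n' : ℝ)))
    {Ω : Type*} [MeasurableSpace Ω] (P Pc : Measure Ω)
    [IsProbabilityMeasure P] [IsProbabilityMeasure Pc]
    (X : ℕ → Ω → ℝ) (hX : IsIID P X (nuP ν₀ F θstar)) (hXc : IsIID Pc X (nuP ν₀ F θc))
    (ni ni1 : ℕ) (hni : 1 ≤ ni) (hlt : ni < ni1) :
    P (⋃ n ∈ Set.Ico ni ni1, Ecp ν₀ F (thickening ρ Θ) θstar θc p f X t n)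
      ≤ ENNReal.ofReal
          (Real.exp (-(ni : ℝ) * (η * rhoEps ν₀ F θstar ε *
              Real.sqrt (vRho (psiFun ν₀ F) (thickening ρ Θ) / 2)) ^ 2
            - p * η * rhoEps ν₀ F θstar ε *
              Real.sqrt (2 * vRho (psiFun ν₀ F) (thickening ρ Θ) ^ 2 /
                VRho (psiFun ν₀ F) (thickening ρ Θ)) *
              Real.sqrt ((ni : ℝ) * f ((t : ℝ) / (ni : ℝ)))))
        * Pc (⋃ n ∈ Set.Ico ni ni1, Ecp ν₀ F (thickening ρ Θ) θstar θc p f X t n) := by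
  classical
  -- abbreviations
  set U : Set (EuclideanSpace ℝ (Fin K)) := thickening ρ Θ with hUdef
  set Rε : ℝ := rhoEps ν₀ F θstar ε with hRdef
  set v : ℝ := vRho (psiFun ν₀ F) U with hvdef
  set V : ℝ := VRho (psiFun ν₀ F) U with hVdef
  set RB : ℝ := -(ni : ℝ) * (η * Rε * Real.sqrt (v / 2)) ^ 2
      - p * η * Rε * Real.sqrt (2 * v ^ 2 / V) * Real.sqrt ((ni : ℝ) * f ((t : ℝ) / (ni : ℝ)))
    with hRBdef
  -- probability measures
  haveI hνprob : IsProbabilityMeasure (nuP ν₀ F θstar) := by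
    rw [← hX.2.2 0]; exact Measure.isProbabilityMeasure_map (hX.1 0).aemeasurable
  haveI hνcprob : IsProbabilityMeasure (nuP ν₀ F θc) := by
    rw [← hXc.2.2 0]; exact Measure.isProbabilityMeasure_map (hXc.1 0).aemeasurable
  have hν₀ : ν₀ ≠ 0 := by
    intro h0
    have h1 : (nuP ν₀ F θstar) univ = 1 := measure_univ
    rw [nuP, h0, withDensity_apply _ MeasurableSet.univ] at h1
    simp at h1
  -- U basic properties
  have hUopen : IsOpen U := isOpen_thickening
  have hUconv : Convex ℝ U := hΘconv.thickening ρ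
  have hθstarU : θstar ∈ U := self_subset_thickening hρ Θ hθΘ
  have hθcU : θc ∈ U := hθc.1
  -- differentiability of ψ on U
  have hψdiff : ∀ θ ∈ U, DifferentiableAt ℝ (psiFun ν₀ F) θ := fun θ hθ =>
    psiFun_differentiableAt hK hF hν₀ (hsub hθ).2
  have hψgrad : ∀ θ ∈ U, HasGradientAt (psiFun ν₀ F) (gradient (psiFun ν₀ F) θ) θ :=
    fun θ hθ => (hψdiff θ hθ).hasGradientAt
  have hΘI : ∀ θ ∈ U, θ ∈ ThetaI (psiFun ν₀ F) := fun θ hθ => interior_subset (hsub hθ).1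
  have hgdiff : ∀ θ ∈ U, DifferentiableAt ℝ (gradient (psiFun ν₀ F)) θ := by
    intro θ hθ
    by_contra hnd
    have h0 : hess (psiFun ν₀ F) θ = 0 := fderiv_zero_of_not_differentiableAt hnd
    have hmem := hΘI θ hθ
    rw [ThetaI, mem_setOf_eq, h0, lamMin_zero hK] at hmem
    exact lt_irrefl 0 hmem.1
  have hhesseq : ∀ θ, hess (psiFun ν₀ F) θ = fderiv ℝ (gradient (psiFun ν₀ F)) θ := fun θ => rfl
  have hgcont : ContinuousOn (gradient (psiFun ν₀ F)) U :=
    fun θ hθ => ((hgdiff θ hθ).continuousAt).continuousWithinAt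
  have hψcont : ContinuousOn (psiFun ν₀ F) U :=
    fun θ hθ => ((hψdiff θ hθ).continuousAt).continuousWithinAt
  -- v facts
  have hvbddBelow : BddBelow {r | ∃ θ ∈ U, r = lamMin (hess (psiFun ν₀ F) θ)} := by
    refine ⟨0, ?_⟩
    rintro r ⟨θ, hθ, rfl⟩
    exact (hΘI θ hθ).1.le
  have hvnonneg : 0 ≤ v := by
    rw [hvdef, vRho]
    refine le_csInf ⟨lamMin (hess (psiFun ν₀ F) θstar), ⟨θstar, hθstarU, rfl⟩⟩ ?_
    rintro r ⟨θ, hθ, rfl⟩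
    exact (hΘI θ hθ).1.le
  have hv_le : ∀ θ ∈ U, ∀ w : EuclideanSpace ℝ (Fin K),
      v * ‖w‖ ^ 2 ≤ ⟪(fderiv ℝ (gradient (psiFun ν₀ F)) θ) w, w⟫_ℝ := by
    intro θ hθ w
    have h1 : v ≤ lamMin (hess (psiFun ν₀ F) θ) := csInf_le hvbddBelow ⟨θ, hθ, rfl⟩
    calc v * ‖w‖ ^ 2 ≤ lamMin (hess (psiFun ν₀ F) θ) * ‖w‖ ^ 2 :=
          mul_le_mul_of_nonneg_right h1 (sq_nonneg _)
    _ ≤ ⟪(fderiv ℝ (gradient (psiFun ν₀ F)) θ) w, w⟫_ℝ := by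
          rw [← hhesseq θ]; exact lamMin_mul_sq_norm_le _ _
  -- basic scalars
  have hη0 : 0 < η := hη.1
  have hp0 : 0 ≤ p := hp.1
  have hRε0 : 0 < Rε := hρε
  have hfar : η * Rε ≤ ‖θstar - θc‖ := hθcfar
  have hαsq : (η * Rε * Real.sqrt (v / 2)) ^ 2 = (η * Rε) ^ 2 * (v / 2) := by
    rw [mul_pow, Real.sq_sqrt (by linarith : (0:ℝ) ≤ v / 2)]
  have hBstar : (η * Rε * Real.sqrt (v / 2)) ^ 2
      ≤ psiFun ν₀ F θstar - psiFun ν₀ F θc - ⟪θstar - θc, gradient (psiFun ν₀ F) θc⟫_ℝ := by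
    have h1 := taylor_lower hUconv hψgrad hgdiff hv_le hθstarU hθcU
    have h2 : (η * Rε) ^ 2 ≤ ‖θstar - θc‖ ^ 2 := by
      have hηR : 0 ≤ η * Rε := by positivity
      nlinarith [norm_nonneg (θstar - θc)]
    rw [hαsq]
    nlinarith
  -- the second-term bound
  have hsecond : ∀ n : ℕ, ni ≤ n → ∀ y : EuclideanSpace ℝ (Fin K),
      ∀ θh ∈ U, gradient (psiFun ν₀ F) θh = y →
      breg (psiFun ν₀ F) θh θc ≥ f ((t : ℝ) / (n : ℝ)) / (n : ℝ) →
      p * η * Rε * Real.sqrt (2 * v ^ 2 / V) * Real.sqrt ((ni : ℝ) * f ((t : ℝ) / (ni : ℝ)))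
        ≤ (n : ℝ) * (p * ‖θstar - θc‖ * ‖gradient (psiFun ν₀ F) θc - y‖) := by
    intro n hn y θh hθhU hgy hbreg
    have hn0 : (0:ℝ) < (n : ℝ) := by exact_mod_cast lt_of_lt_of_le hni hn
    have htermnn : 0 ≤ (n : ℝ) * (p * ‖θstar - θc‖ * ‖gradient (psiFun ν₀ F) θc - y‖) := by
      positivity
    by_cases hVbdd : BddAbove {r | ∃ θ ∈ U, r = lamMax (hess (psiFun ν₀ F) θ)}
    · -- bounded case
      have hVub : ∀ θ ∈ U, lamMax (hess (psiFun ν₀ F) θ) ≤ V := by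
        intro θ hθ
        rw [hVdef, VRho]
        exact le_csSup hVbdd ⟨θ, hθ, rfl⟩
      have hV_le : ∀ θ ∈ U, ∀ w : EuclideanSpace ℝ (Fin K),
          ⟪(fderiv ℝ (gradient (psiFun ν₀ F)) θ) w, w⟫_ℝ ≤ V * ‖w‖ ^ 2 := by
        intro θ hθ w
        calc ⟪(fderiv ℝ (gradient (psiFun ν₀ F)) θ) w, w⟫_ℝ
            ≤ lamMax (fderiv ℝ (gradient (psiFun ν₀ F)) θ) * ‖w‖ ^ 2 :=
              inner_le_lamMax_mul_sq_norm _ _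
        _ ≤ V * ‖w‖ ^ 2 := by
              rw [← hhesseq θ]
              exact mul_le_mul_of_nonneg_right (hVub θ hθ) (sq_nonneg _)
      have hVpos : 0 < V :=
        lt_of_lt_of_le (hΘI θstar hθstarU).1
          (le_trans (hΘI θstar hθstarU).2 (hVub θstar hθstarU))
      set fn : ℝ := f ((t : ℝ) / (n : ℝ)) with hfndef
      have hfn0 : 0 ≤ fn := hf0 _
      have hBh : fn / (n : ℝ) ≤ V / 2 * ‖θc - θh‖ ^ 2 := by
        refine le_trans hbreg ?_
        have := taylor_upper hUconv hψgrad hgdiff hV_le hθcU hθhU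
        have hbr : breg (psiFun ν₀ F) θh θc
            = psiFun ν₀ F θc - psiFun ν₀ F θh - ⟪θc - θh, gradient (psiFun ν₀ F) θh⟫_ℝ := rfl
        rw [hbr]
        exact this
      have hnormsq : 2 * (fn / (n : ℝ)) / V ≤ ‖θc - θh‖ ^ 2 := by
        rw [div_le_iff₀ hVpos] at *
        nlinarith
      have hgnorm : v * ‖θc - θh‖ ≤ ‖gradient (psiFun ν₀ F) θc - y‖ := by
        rw [← hgy]
        have hm := strong_mono hUconv hgdiff hv_le hθcU hθhU
        have hcs := real_inner_le_norm (gradient (psiFun ν₀ F) θc - gradient (psiFun ν₀ F) θh)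
          (θc - θh)
        rcases eq_or_ne (‖θc - θh‖) 0 with h0 | h0
        · rw [h0, mul_zero]; exact norm_nonneg _
        · have hpos : 0 < ‖θc - θh‖ := lt_of_le_of_ne (norm_nonneg _) (Ne.symm h0)
          nlinarith
      have hsq : Real.sqrt (2 * (fn / (n : ℝ)) / V) ≤ ‖θc - θh‖ := by
        rw [show ‖θc - θh‖ = Real.sqrt (‖θc - θh‖ ^ 2) from (Real.sqrt_sq (norm_nonneg _)).symm]
        exact Real.sqrt_le_sqrt hnormsq
      have hkey : v * Real.sqrt (2 * (fn / (n : ℝ)) / V) ≤ ‖gradient (psiFun ν₀ F) θc - y‖ :=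
        le_trans (mul_le_mul_of_nonneg_left hsq hvnonneg) hgnorm
      have halg : (n : ℝ) * (v * Real.sqrt (2 * (fn / (n : ℝ)) / V))
          = Real.sqrt (2 * v ^ 2 / V) * Real.sqrt ((n : ℝ) * fn) := by
        have h1 : (n : ℝ) * (v * Real.sqrt (2 * (fn / (n : ℝ)) / V))
            = Real.sqrt (((n : ℝ) * v) ^ 2 * (2 * (fn / (n : ℝ)) / V)) := by
          rw [Real.sqrt_mul (sq_nonneg _), Real.sqrt_sq (by positivity : (0:ℝ) ≤ (n : ℝ) * v)]
          ring
        have h2 : ((n : ℝ) * v) ^ 2 * (2 * (fn / (n : ℝ)) / V)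
            = 2 * v ^ 2 / V * ((n : ℝ) * fn) := by
          field_simp
        rw [h1, h2, Real.sqrt_mul (by positivity : (0:ℝ) ≤ 2 * v ^ 2 / V)]
      have hmonof : Real.sqrt ((ni : ℝ) * f ((t : ℝ) / (ni : ℝ))) ≤ Real.sqrt ((n : ℝ) * fn) :=
        Real.sqrt_le_sqrt (hfmono ni n hni hn)
      have hstep : (n : ℝ) * (p * (η * Rε) * (v * Real.sqrt (2 * (fn / (n : ℝ)) / V)))
          ≤ (n : ℝ) * (p * ‖θstar - θc‖ * ‖gradient (psiFun ν₀ F) θc - y‖) := by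
        apply mul_le_mul_of_nonneg_left ?_ hn0.le
        apply mul_le_mul
        · exact mul_le_mul_of_nonneg_left hfar hp0
        · exact hkey
        · positivity
        · positivity
      calc p * η * Rε * Real.sqrt (2 * v ^ 2 / V) * Real.sqrt ((ni : ℝ) * f ((t : ℝ) / (ni : ℝ)))
          ≤ p * η * Rε * Real.sqrt (2 * v ^ 2 / V) * Real.sqrt ((n : ℝ) * fn) := by
            apply mul_le_mul_of_nonneg_left hmonof (by positivity)
      _ = (n : ℝ) * (p * (η * Rε) * (v * Real.sqrt (2 * (fn / (n : ℝ)) / V))) := by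
            rw [show (n : ℝ) * (p * (η * Rε) * (v * Real.sqrt (2 * (fn / (n : ℝ)) / V)))
              = p * (η * Rε) * ((n : ℝ) * (v * Real.sqrt (2 * (fn / (n : ℝ)) / V))) by ring,
              halg]
            ring
      _ ≤ (n : ℝ) * (p * ‖θstar - θc‖ * ‖gradient (psiFun ν₀ F) θc - y‖) := hstep
    · -- unbounded case : V = 0 and the χ term vanishes
      have hV0 : V = 0 := by
        rw [hVdef, VRho]
        exact Real.sSup_of_not_bddAbove hVbdd
      rw [hV0]
      simp only [div_zero, Real.sqrt_zero, mul_zero, zero_mul]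
      exact htermnn
  -- the pointwise heart inequality
  have hheart : ∀ n : ℕ, ni ≤ n → ∀ y : EuclideanSpace ℝ (Fin K),
      (∃ θh ∈ U, gradient (psiFun ν₀ F) θh = y ∧
        breg (psiFun ν₀ F) θh θc ≥ f ((t : ℝ) / (n : ℝ)) / (n : ℝ)) →
      y ∈ coneC (psiFun ν₀ F) θstar p θc →
      (n : ℝ) * ⟪θstar - θc, y⟫_ℝ - (n : ℝ) * (psiFun ν₀ F θstar - psiFun ν₀ F θc) ≤ RB := by
    intro n hn y hev hcone
    obtain ⟨θh, hθhU, hgθh, hbreg⟩ := hev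
    have hn0 : (0:ℝ) < (n : ℝ) := by exact_mod_cast lt_of_lt_of_le hni hn
    have hnin : (ni : ℝ) ≤ (n : ℝ) := by exact_mod_cast hn
    have hconeineq : ⟪θstar - θc, gradient (psiFun ν₀ F) θc - y⟫_ℝ
        ≥ p * ‖θstar - θc‖ * ‖gradient (psiFun ν₀ F) θc - y‖ := hcone
    have hid : (n : ℝ) * ⟪θstar - θc, y⟫_ℝ - (n : ℝ) * (psiFun ν₀ F θstar - psiFun ν₀ F θc)
        = -((n : ℝ) * ⟪θstar - θc, gradient (psiFun ν₀ F) θc - y⟫_ℝ)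
          - (n : ℝ) * (psiFun ν₀ F θstar - psiFun ν₀ F θc
            - ⟪θstar - θc, gradient (psiFun ν₀ F) θc⟫_ℝ) := by
      rw [inner_sub_right]
      ring
    rw [hid, hRBdef]
    have h3 : (n : ℝ) * (p * ‖θstar - θc‖ * ‖gradient (psiFun ν₀ F) θc - y‖)
        ≤ (n : ℝ) * ⟪θstar - θc, gradient (psiFun ν₀ F) θc - y⟫_ℝ :=
      mul_le_mul_of_nonneg_left hconeineq hn0.le
    have h4 : (ni : ℝ) * (η * Rε * Real.sqrt (v / 2)) ^ 2
        ≤ (n : ℝ) * (psiFun ν₀ F θstar - psiFun ν₀ F θc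
            - ⟪θstar - θc, gradient (psiFun ν₀ F) θc⟫_ℝ) := by
      calc (ni : ℝ) * (η * Rε * Real.sqrt (v / 2)) ^ 2
          ≤ (n : ℝ) * (η * Rε * Real.sqrt (v / 2)) ^ 2 :=
            mul_le_mul_of_nonneg_right hnin (sq_nonneg _)
      _ ≤ (n : ℝ) * (psiFun ν₀ F θstar - psiFun ν₀ F θc
            - ⟪θstar - θc, gradient (psiFun ν₀ F) θc⟫_ℝ) :=
            mul_le_mul_of_nonneg_left hBstar hn0.le
    have h5 := hsecond n hn y θh hθhU hgθh hbreg
    linarith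

  -- density between the two base measures
  set r : ℝ → ℝ≥0∞ := fun x =>
    ENNReal.ofReal (Real.exp (⟪θstar - θc, F x⟫_ℝ - (psiFun ν₀ F θstar - psiFun ν₀ F θc)))
    with hrdef
  have hrmeas : Measurable r := by
    apply Measurable.ennreal_ofReal
    exact Real.measurable_exp.comp ((measurable_const.inner hF).sub measurable_const)
  have hdens : nuP ν₀ F θstar = (nuP ν₀ F θc).withDensity r := by
    rw [nuP, nuP, ← withDensity_mul _ (by
        apply Measurable.ennreal_ofReal
        exact Real.measurable_exp.comp ((measurable_const.inner hF).sub measurable_const)) hrmeas]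
    congr 1
    funext x
    simp only [Pi.mul_apply, hrdef]
    rw [← ENNReal.ofReal_mul (Real.exp_pos _).le, ← Real.exp_add]
    congr 1
    rw [inner_sub_left]
    ring
  -- per n constructions
  set Sv : ∀ n : ℕ, Ω → (Fin n → ℝ) := fun n ω i => X i ω with hSvdef
  have hSvmeas : ∀ n, Measurable (Sv n) := fun n => measurable_pi_lambda _ (fun i => hX.1 i)
  set Gn : ∀ n : ℕ, (Fin n → ℝ) → EuclideanSpace ℝ (Fin K) :=
    fun n w => (n : ℝ)⁻¹ • ∑ i : Fin n, F (w i) with hGndef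
  have hGnmeas : ∀ n, Measurable (Gn n) := by
    intro n
    exact (Finset.measurable_sum _ (fun i _ => hF.comp (measurable_pi_apply i))).const_smul ((n : ℝ)⁻¹)
  set An : ℕ → Set (EuclideanSpace ℝ (Fin K)) := fun n =>
    {y | ∃ θh ∈ U, gradient (psiFun ν₀ F) θh = y ∧
      breg (psiFun ν₀ F) θh θc ≥ f ((t : ℝ) / (n : ℝ)) / (n : ℝ)} with hAndef
  have hAnmeas : ∀ n, MeasurableSet (An n) := by
    intro n
    have hbcont : ContinuousOn (fun θ => breg (psiFun ν₀ F) θ θc) U := by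
      simp only [breg]
      exact (continuousOn_const.sub hψcont).sub
        ((continuousOn_const.sub continuousOn_id).inner hgcont)
    exact measurableSet_image_graddomain hUopen hgcont hbcont _
  have hConemeas : MeasurableSet (coneC (psiFun ν₀ F) θstar p θc) := by
    have hcl : IsClosed (coneC (psiFun ν₀ F) θstar p θc) := by
      have hrfl : coneC (psiFun ν₀ F) θstar p θc
          = {y | p * ‖θstar - θc‖ * ‖gradient (psiFun ν₀ F) θc - y‖
              ≤ ⟪θstar - θc, gradient (psiFun ν₀ F) θc - y⟫_ℝ} := rfl
      rw [hrfl]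
      apply isClosed_le
      · exact continuous_const.mul ((continuous_const.sub continuous_id).norm)
      · exact continuous_const.inner (continuous_const.sub continuous_id)
    exact hcl.measurableSet
  set Bn : ∀ n : ℕ, Set (Fin n → ℝ) := fun n =>
    Gn n ⁻¹' (An n ∩ coneC (psiFun ν₀ F) θstar p θc) with hBndef
  have hBnmeas : ∀ n, MeasurableSet (Bn n) := fun n =>
    (hGnmeas n) ((hAnmeas n).inter hConemeas)
  have hEset : ∀ n : ℕ, Ecp ν₀ F U θstar θc p f X t n = Sv n ⁻¹' Bn n := by
    intro n
    ext ω
    have hhat : hatF F X n ω = Gn n (Sv n ω) := by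
      rw [hatF, hGndef, hSvdef, ← Fin.sum_univ_eq_sum_range (fun i => F (X i ω)) n]
    show ((∃ θh ∈ U, gradient (psiFun ν₀ F) θh = hatF F X n ω ∧
        breg (psiFun ν₀ F) θh θc ≥ f ((t : ℝ) / (n : ℝ)) / (n : ℝ)) ∧
        hatF F X n ω ∈ coneC (psiFun ν₀ F) θstar p θc) ↔
      (Gn n (Sv n ω) ∈ An n ∧ Gn n (Sv n ω) ∈ coneC (psiFun ν₀ F) θstar p θc)
    rw [hhat]
    exact Iff.rfl
  -- bound of the density product on Bn
  set cB : ℝ≥0∞ := ENNReal.ofReal (Real.exp RB) with hcBdef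
  have hWnle : ∀ n : ℕ, ni ≤ n → ∀ w ∈ Bn n, (∏ i : Fin n, r (w i)) ≤ cB := by
    intro n hn w hw
    have hn0 : (0:ℝ) < (n : ℝ) := by exact_mod_cast lt_of_lt_of_le hni hn
    have hwA : Gn n w ∈ An n := hw.1
    have hwC : Gn n w ∈ coneC (psiFun ν₀ F) θstar p θc := hw.2
    have hprod : (∏ i : Fin n, r (w i))
        = ENNReal.ofReal (Real.exp (∑ i : Fin n,
            (⟪θstar - θc, F (w i)⟫_ℝ - (psiFun ν₀ F θstar - psiFun ν₀ F θc)))) := by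
      rw [Real.exp_sum, ENNReal.ofReal_prod_of_nonneg (fun i _ => (Real.exp_pos _).le)]
    have hsum : ∑ i : Fin n, (⟪θstar - θc, F (w i)⟫_ℝ - (psiFun ν₀ F θstar - psiFun ν₀ F θc))
        = (n : ℝ) * ⟪θstar - θc, Gn n w⟫_ℝ
          - (n : ℝ) * (psiFun ν₀ F θstar - psiFun ν₀ F θc) := by
      rw [Finset.sum_sub_distrib, Finset.sum_const, Finset.card_univ, Fintype.card_fin,
        nsmul_eq_mul, ← inner_sum]
      congr 1
      rw [hGndef]
      rw [real_inner_smul_right]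
      field_simp
    rw [hprod, hsum, hcBdef]
    exact ENNReal.ofReal_le_ofReal (Real.exp_le_exp.mpr (hheart n hn (Gn n w) hwA hwC))
  -- cylinder preimages
  set Q : ∀ (_ n : ℕ), Set (Fin n → ℝ) := fun m n =>
    if h : m ≤ n then (fun (w : Fin n → ℝ) (i : Fin m) => w (Fin.castLE h i)) ⁻¹' Bn m else ∅
    with hQdef
  have hQmeas : ∀ m n, MeasurableSet (Q m n) := by
    intro m n
    by_cases h : m ≤ n
    · have heq : Q m n = (fun (w : Fin n → ℝ) (i : Fin m) => w (Fin.castLE h i)) ⁻¹' Bn m := by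
        simp only [hQdef]; exact dif_pos h
      rw [heq]
      exact (measurable_pi_lambda _ fun i => measurable_pi_apply _) (hBnmeas m)
    · have heq : Q m n = ∅ := by simp only [hQdef]; exact dif_neg h
      rw [heq]; exact MeasurableSet.empty
  have hQpre : ∀ m n (h : m ≤ n), Sv n ⁻¹' Q m n = Ecp ν₀ F U θstar θc p f X t m := by
    intro m n h
    rw [hEset m]
    have heq : Q m n = (fun (w : Fin n → ℝ) (i : Fin m) => w (Fin.castLE h i)) ⁻¹' Bn m := by
      simp only [hQdef]; exact dif_pos h
    rw [heq, ← Set.preimage_comp]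
    have hcomp : (fun (w : Fin n → ℝ) (i : Fin m) => w (Fin.castLE h i)) ∘ Sv n = Sv m := by
      funext ω i
      simp only [hSvdef, Function.comp_apply, Fin.coe_castLE]
    rw [hcomp]
  set Dn : ∀ n : ℕ, Set (Fin n → ℝ) := fun n => Bn n \ ⋃ m ∈ Finset.Ico ni n, Q m n with hDndef
  have hDnmeas : ∀ n, MeasurableSet (Dn n) := fun n =>
    (hBnmeas n).diff (Finset.measurableSet_biUnion _ fun m _ => hQmeas m n)
  have hDnsub : ∀ n, Dn n ⊆ Bn n := fun n => diff_subset
  set E' : ℕ → Set Ω := fun n =>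
    Ecp ν₀ F U θstar θc p f X t n \ ⋃ m ∈ Finset.Ico ni n, Ecp ν₀ F U θstar θc p f X t m
    with hE'def
  have hE'pre : ∀ n, E' n = Sv n ⁻¹' Dn n := by
    intro n
    simp only [hE'def, hDndef]
    rw [Set.preimage_diff, hEset n]
    congr 1
    rw [Set.preimage_iUnion₂]
    apply Set.iUnion₂_congr
    intro m hm
    exact (hQpre m n (le_of_lt (Finset.mem_Ico.mp hm).2)).symm
  -- joint laws
  have hmapP : ∀ n : ℕ, P.map (Sv n) = Measure.pi (fun _ : Fin n => nuP ν₀ F θstar) :=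
    fun n => map_iid P hX.1 hX.2.1 hX.2.2 n
  have hmapPc : ∀ n : ℕ, Pc.map (Sv n) = Measure.pi (fun _ : Fin n => nuP ν₀ F θc) :=
    fun n => map_iid Pc hXc.1 hXc.2.1 hXc.2.2 n
  haveI hwdprob : IsProbabilityMeasure ((nuP ν₀ F θc).withDensity r) := by
    rw [← hdens]; exact hνprob
  have hpiden : ∀ n : ℕ, Measure.pi (fun _ : Fin n => nuP ν₀ F θstar)
      = (Measure.pi fun _ : Fin n => nuP ν₀ F θc).withDensity
          (fun w => ∏ i : Fin n, r (w i)) := by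
    intro n
    calc Measure.pi (fun _ : Fin n => nuP ν₀ F θstar)
        = Measure.pi (fun _ : Fin n => (nuP ν₀ F θc).withDensity r) := by rw [← hdens]
    _ = _ := pi_withDensity (nuP ν₀ F θc) r hrmeas
  -- per-n measure bound
  have hPn : ∀ n : ℕ, ni ≤ n → P (E' n) ≤ cB * Pc (E' n) := by
    intro n hn
    rw [hE'pre n]
    have hPc' : Pc (Sv n ⁻¹' Dn n) = (Measure.pi fun _ : Fin n => nuP ν₀ F θc) (Dn n) := by
      rw [← Measure.map_apply (hSvmeas n) (hDnmeas n), hmapPc n]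
    rw [hPc', ← Measure.map_apply (hSvmeas n) (hDnmeas n), hmapP n, hpiden n,
      withDensity_apply _ (hDnmeas n)]
    calc ∫⁻ w in Dn n, ∏ i : Fin n, r (w i) ∂(Measure.pi fun _ : Fin n => nuP ν₀ F θc)
        ≤ ∫⁻ _ in Dn n, cB ∂(Measure.pi fun _ : Fin n => nuP ν₀ F θc) :=
          setLIntegral_mono measurable_const (fun w hw => hWnle n hn w (hDnsub n hw))
    _ = cB * (Measure.pi fun _ : Fin n => nuP ν₀ F θc) (Dn n) := setLIntegral_const _ _
  -- disjointness and measurability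
  have hE'subset : ∀ n, E' n ⊆ Ecp ν₀ F U θstar θc p f X t n := by
    intro n
    simp only [hE'def]
    exact diff_subset
  have hdisj : (↑(Finset.Ico ni ni1) : Set ℕ).PairwiseDisjoint E' := by
    intro m hm n hn hmn
    simp only [Finset.coe_Ico, Set.mem_Ico] at hm hn
    rcases lt_or_gt_of_ne hmn with h | h
    · apply Set.disjoint_left.mpr
      intro ω hωm hωn
      exact hωn.2 (Set.mem_biUnion (Finset.mem_Ico.mpr ⟨hm.1, h⟩) (hE'subset m hωm))
    · apply Set.disjoint_left.mpr
      intro ω hωm hωn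
      exact hωm.2 (Set.mem_biUnion (Finset.mem_Ico.mpr ⟨hn.1, h⟩) (hE'subset n hωn))
  have hE'meas : ∀ n, MeasurableSet (E' n) := by
    intro n; rw [hE'pre n]; exact (hSvmeas n) (hDnmeas n)
  -- union equality
  have hWeq : (⋃ n ∈ Set.Ico ni ni1, Ecp ν₀ F U θstar θc p f X t n)
      = ⋃ n ∈ Finset.Ico ni ni1, E' n := by
    ext ω
    simp only [Set.mem_iUnion, exists_prop, Set.mem_Ico, Finset.mem_Ico]
    constructor
    · rintro ⟨n, hn, hωn⟩
      set N := {m : ℕ | (ni ≤ m ∧ m < ni1) ∧ ω ∈ Ecp ν₀ F U θstar θc p f X t m} with hNdef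
      have hNne : N.Nonempty := ⟨n, hn, hωn⟩
      have hmem := Nat.sInf_mem hNne
      refine ⟨sInf N, hmem.1, ⟨hmem.2, ?_⟩⟩
      intro hcon
      rw [Set.mem_iUnion₂] at hcon
      obtain ⟨m, hm, hωm⟩ := hcon
      obtain ⟨hm1, hm2⟩ := Finset.mem_Ico.mp hm
      have hmN : m ∈ N := ⟨⟨hm1, lt_trans hm2 hmem.1.2⟩, hωm⟩
      exact Nat.notMem_of_lt_sInf hm2 hmN
    · rintro ⟨n, hn, hωn⟩
      exact ⟨n, hn, hE'subset n hωn⟩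
  -- final chain
  calc P (⋃ n ∈ Set.Ico ni ni1, Ecp ν₀ F U θstar θc p f X t n)
      = ∑ n ∈ Finset.Ico ni ni1, P (E' n) := by
        rw [hWeq, measure_biUnion_finset hdisj (fun n _ => hE'meas n)]
  _ ≤ ∑ n ∈ Finset.Ico ni ni1, cB * Pc (E' n) :=
        Finset.sum_le_sum (fun n hn => hPn n (Finset.mem_Ico.mp hn).1)
  _ = cB * ∑ n ∈ Finset.Ico ni ni1, Pc (E' n) := by rw [Finset.mul_sum]
  _ = cB * Pc (⋃ n ∈ Set.Ico ni ni1, Ecp ν₀ F U θstar θc p f X t n) := by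
        rw [hWeq, measure_biUnion_finset hdisj (fun n _ => hE'meas n)]
end
end

section
/- For every integer K ≥ 1 and every ε > 0, ∫_0^ε e^{−r²/2} r^{K−1} dr ≥ (1/(2K)) · min{ε, √(1 + 2/K)}^K. -/
open Real

/-- for every integer `K ≥ 1` and every `ε > 0`,
`∫_0^ε e^{-r²/2} r^{K-1} dr ≥ (1/(2K)) · min{ε, √(1 + 2/K)}^K`. -/
theorem gaussian_radial_integral_lower_bound (K : ℕ) (hK : 1 ≤ K) (ε : ℝ) (hε : 0 < ε) :
    (1 / (2 * (K : ℝ))) * min ε (Real.sqrt (1 + 2 / (K : ℝ))) ^ K ≤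
      ∫ r in (0:ℝ)..ε, Real.exp (-r ^ 2 / 2) * r ^ (K - 1) := by
  obtain ⟨k, rfl⟩ : ∃ k, K = k + 1 := ⟨K - 1, by omega⟩
  set m := min ε (Real.sqrt (1 + 2 / ((k + 1 : ℕ) : ℝ))) with hmdef
  have hK0 : (0:ℝ) < ((k + 1 : ℕ) : ℝ) := by positivity
  have hsq : (0:ℝ) < 1 + 2 / ((k + 1 : ℕ) : ℝ) := by positivity
  have hm0 : 0 < m := lt_min hε (Real.sqrt_pos.mpr hsq)
  have hmε : m ≤ ε := min_le_left _ _
  have hm2 : m ^ 2 ≤ 1 + 2 / ((k + 1 : ℕ) : ℝ) := by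
    calc m ^ 2 ≤ (Real.sqrt (1 + 2 / ((k + 1 : ℕ) : ℝ))) ^ 2 :=
          pow_le_pow_left₀ hm0.le (min_le_right _ _) 2
      _ = 1 + 2 / ((k + 1 : ℕ) : ℝ) := Real.sq_sqrt hsq.le
  have hcont : Continuous fun r : ℝ => Real.exp (-r ^ 2 / 2) * r ^ (k + 1 - 1) := by
    continuity
  have hcont2 : Continuous fun r : ℝ => (1 - r ^ 2 / 2) * r ^ k := by
    continuity
  -- step 1: integral over (0,m) ≤ integral over (0,ε)
  have h1 : (∫ r in (0:ℝ)..m, Real.exp (-r ^ 2 / 2) * r ^ (k + 1 - 1))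
      ≤ ∫ r in (0:ℝ)..ε, Real.exp (-r ^ 2 / 2) * r ^ (k + 1 - 1) := by
    apply intervalIntegral.integral_mono_interval le_rfl hm0.le hmε
    · filter_upwards [MeasureTheory.ae_restrict_mem measurableSet_Ioc] with r hr
      have : (0:ℝ) ≤ r := hr.1.le
      positivity
    · exact hcont.intervalIntegrable _ _
  -- step 2: pointwise bound on [0,m]
  have h2 : (∫ r in (0:ℝ)..m, (1 - r ^ 2 / 2) * r ^ k)
      ≤ ∫ r in (0:ℝ)..m, Real.exp (-r ^ 2 / 2) * r ^ (k + 1 - 1) := by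
    apply intervalIntegral.integral_mono_on hm0.le
      (hcont2.intervalIntegrable _ _) (hcont.intervalIntegrable _ _)
    intro r hr
    have hr0 : (0:ℝ) ≤ r := hr.1
    have hexp : 1 - r ^ 2 / 2 ≤ Real.exp (-r ^ 2 / 2) := by
      have := Real.add_one_le_exp (-r ^ 2 / 2)
      linarith
    simpa using mul_le_mul_of_nonneg_right hexp (pow_nonneg hr0 k)
  -- step 3: compute the polynomial integral
  have h3 : (∫ r in (0:ℝ)..m, (1 - r ^ 2 / 2) * r ^ k)
      = m ^ (k + 1) / (k + 1) - m ^ (k + 3) / (2 * (k + 3)) := by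
    have heq : ∀ r : ℝ, (1 - r ^ 2 / 2) * r ^ k = r ^ k - r ^ (k + 2) / 2 := by
      intro r; ring
    simp only [heq]
    rw [intervalIntegral.integral_sub ((continuous_pow k).intervalIntegrable _ _)
      (((continuous_pow (k + 2)).div_const 2).intervalIntegrable _ _)]
    have e2 : (∫ x in (0:ℝ)..m, x ^ (k + 2) / 2)
        = (∫ x in (0:ℝ)..m, x ^ (k + 2)) / 2 :=
      intervalIntegral.integral_div 2 fun x => x ^ (k + 2)
    rw [e2, integral_pow, integral_pow]
    have hk1 : ((k:ℝ) + 1) ≠ 0 := by positivity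
    have hk3 : ((k:ℝ) + 3) ≠ 0 := by positivity
    push_cast
    field_simp
    ring
  -- step 4: final arithmetic
  have h4 : (1 / (2 * ((k + 1 : ℕ) : ℝ))) * m ^ (k + 1)
      ≤ m ^ (k + 1) / (k + 1) - m ^ (k + 3) / (2 * (k + 3)) := by
    have hkr : ((k + 1 : ℕ) : ℝ) = (k : ℝ) + 1 := by push_cast; ring
    rw [hkr] at hm2 ⊢
    have hk1 : (0:ℝ) < (k : ℝ) + 1 := by positivity
    have hk3 : (0:ℝ) < (k : ℝ) + 3 := by positivity
    have hmk : (0:ℝ) ≤ m ^ (k + 1) := pow_nonneg hm0.le _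
    have hkey : m ^ (k + 3) * ((k : ℝ) + 1) ≤ m ^ (k + 1) * ((k : ℝ) + 3) := by
      have h5 : m ^ (k + 3) = m ^ (k + 1) * m ^ 2 := by ring
      have h6 : m ^ 2 * ((k : ℝ) + 1) ≤ (k : ℝ) + 3 := by
        calc m ^ 2 * ((k : ℝ) + 1) ≤ (1 + 2 / ((k : ℝ) + 1)) * ((k : ℝ) + 1) :=
              mul_le_mul_of_nonneg_right hm2 hk1.le
          _ = (k : ℝ) + 3 := by field_simp; ring
      calc m ^ (k + 3) * ((k : ℝ) + 1) = m ^ (k + 1) * (m ^ 2 * ((k : ℝ) + 1)) := by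
            rw [h5]; ring
        _ ≤ m ^ (k + 1) * ((k : ℝ) + 3) := mul_le_mul_of_nonneg_left h6 hmk
    have hid : m ^ (k + 1) / ((k : ℝ) + 1) - m ^ (k + 3) / (2 * ((k : ℝ) + 3))
        - (1 / (2 * ((k : ℝ) + 1))) * m ^ (k + 1)
        = (m ^ (k + 1) * ((k : ℝ) + 3) - m ^ (k + 3) * ((k : ℝ) + 1))
          / (2 * ((k : ℝ) + 1) * ((k : ℝ) + 3)) := by
      field_simp
      ring
    have hnn : (0:ℝ) ≤ (m ^ (k + 1) * ((k : ℝ) + 3) - m ^ (k + 3) * ((k : ℝ) + 1))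
          / (2 * ((k : ℝ) + 1) * ((k : ℝ) + 3)) :=
      div_nonneg (by linarith) (by positivity)
    linarith [hid ▸ hnn]
  calc (1 / (2 * ((k + 1 : ℕ) : ℝ))) * m ^ (k + 1)
      ≤ m ^ (k + 1) / (k + 1) - m ^ (k + 3) / (2 * (k + 3)) := h4
    _ = ∫ r in (0:ℝ)..m, (1 - r ^ 2 / 2) * r ^ k := h3.symm
    _ ≤ ∫ r in (0:ℝ)..m, Real.exp (-r ^ 2 / 2) * r ^ (k + 1 - 1) := h2
    _ ≤ _ := h1
end

section
/- Let t > 0, let 1 ≤ m ≤ M be integers, and let f : (0,∞) → ℝ be such that n ↦ f(t/n)/n is non-increasing for n ∈ [m, M]. Suppose there exists F_M ≤ μ* with Φ*(F_M) = f(t/M)/M. Then Pr( ∃ n with m ≤ n < M such that F̂_n ≤ μ* and Φ*(F̂_n) ≥ f(t/n)/n ) ≤ exp( −(m/M) f(t/M) ). -/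
open MeasureTheory Real Set ProbabilityTheory
open scoped ENNReal BigOperators

noncomputable section

/-- The log-partition function of the canonical one-dimensional exponential family. -/
noncomputable def psi1 (ν₀ : Measure ℝ) (θ : ℝ) : ℝ :=
  Real.log ((∫⁻ x, ENNReal.ofReal (Real.exp (θ * x)) ∂ν₀).toReal)

/-- The parameter set `Θ_D` of the canonical one-dimensional family. -/
def ThetaD1 (ν₀ : Measure ℝ) : Set ℝ :=
  {θ | (∫⁻ x, ENNReal.ofReal (Real.exp (θ * x)) ∂ν₀) < ⊤}

/-- The member `ν_θ` of the family, with density `x ↦ exp(θ x - ψ(θ))` w.r.t. `ν₀`. -/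
noncomputable def nuP1 (ν₀ : Measure ℝ) (θ : ℝ) : Measure ℝ :=
  ν₀.withDensity (fun x => ENNReal.ofReal (Real.exp (θ * x - psi1 ν₀ θ)))

/-- The Fenchel–Legendre dual `Φ*(y) = sup_η (η y - Φ(η))` of `Φ(η) = ψ(θ*+η) - ψ(θ*)`,
where `Φ = +∞` outside of `Θ_D - θ*` (those `η` do not contribute). -/
noncomputable def phiStar1 (ν₀ : Measure ℝ) (θstar : ℝ) (y : ℝ) : ℝ :=
  sSup {r | ∃ η : ℝ, θstar + η ∈ ThetaD1 ν₀ ∧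
    r = η * y - psi1 ν₀ (θstar + η) + psi1 ν₀ θstar}

/-- `X` is an i.i.d. sequence with common law `ν` under `P`. -/
def IsIID1 {Ω : Type*} [MeasurableSpace Ω] (P : Measure Ω) (X : ℕ → Ω → ℝ)
    (ν : Measure ℝ) : Prop :=
  (∀ i, Measurable (X i)) ∧
    iIndepFun X P ∧
    ∀ i, P.map (X i) = ν

/-- The empirical mean `F̂_n = (1/n) Σ_{i<n} X_i`. -/
noncomputable def empMean {Ω : Type*} (X : ℕ → Ω → ℝ) (n : ℕ) (ω : Ω) : ℝ :=
  (n : ℝ)⁻¹ * ∑ i ∈ Finset.range n, X i ω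

namespace BCaux

variable {ν₀ : Measure ℝ}

lemma meas_ofReal_exp (θ : ℝ) : Measurable fun x : ℝ => ENNReal.ofReal (Real.exp (θ * x)) :=
  (ENNReal.measurable_ofReal.comp (Real.measurable_exp.comp (measurable_id'.const_mul θ)))

lemma lint_pos (hν : ν₀ ≠ 0) (θ : ℝ) :
    0 < ∫⁻ x, ENNReal.ofReal (Real.exp (θ * x)) ∂ν₀ := by
  rw [lintegral_pos_iff_support (meas_ofReal_exp θ)]
  have : (Function.support fun x : ℝ => ENNReal.ofReal (Real.exp (θ * x))) = Set.univ := by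
    ext x
    simp [Function.mem_support, ENNReal.ofReal_eq_zero, not_le, Real.exp_pos]
  rw [this]
  exact Measure.measure_univ_pos.2 hν

lemma toReal_pos (hν : ν₀ ≠ 0) {θ : ℝ} (hθ : θ ∈ ThetaD1 ν₀) :
    0 < (∫⁻ x, ENNReal.ofReal (Real.exp (θ * x)) ∂ν₀).toReal :=
  ENNReal.toReal_pos (lint_pos hν θ).ne' hθ.ne

lemma exp_psi1 (hν : ν₀ ≠ 0) {θ : ℝ} (hθ : θ ∈ ThetaD1 ν₀) :
    Real.exp (psi1 ν₀ θ) = (∫⁻ x, ENNReal.ofReal (Real.exp (θ * x)) ∂ν₀).toReal :=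
  Real.exp_log (toReal_pos hν hθ)

lemma ofReal_exp_psi1 (hν : ν₀ ≠ 0) {θ : ℝ} (hθ : θ ∈ ThetaD1 ν₀) :
    ENNReal.ofReal (Real.exp (psi1 ν₀ θ)) = ∫⁻ x, ENNReal.ofReal (Real.exp (θ * x)) ∂ν₀ := by
  rw [exp_psi1 hν hθ, ENNReal.ofReal_toReal hθ.ne]

lemma integrable_exp {θ : ℝ} (hθ : θ ∈ ThetaD1 ν₀) :
    Integrable (fun x => Real.exp (θ * x)) ν₀ := by
  refine ⟨((measurable_id'.const_mul θ).exp).aestronglyMeasurable, ?_⟩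
  rw [HasFiniteIntegral]
  have : ∀ x : ℝ, ‖Real.exp (θ * x)‖ₑ = ENNReal.ofReal (Real.exp (θ * x)) := by
    intro x
    rw [← ofReal_norm_eq_enorm, Real.norm_eq_abs, abs_of_pos (Real.exp_pos _)]
  simp_rw [this]
  exact hθ

lemma integral_exp (hν : ν₀ ≠ 0) {θ : ℝ} (hθ : θ ∈ ThetaD1 ν₀) :
    ∫ x, Real.exp (θ * x) ∂ν₀ = Real.exp (psi1 ν₀ θ) := by
  rw [MeasureTheory.integral_eq_lintegral_of_nonneg_ae
    (Filter.Eventually.of_forall fun x => (Real.exp_pos _).le)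
    ((measurable_id'.const_mul θ).exp).aestronglyMeasurable,
    exp_psi1 hν hθ]

end BCaux

namespace BCaux2
open BCaux

variable {ν₀ : Measure ℝ} {θstar : ℝ}

lemma lintegral_exp_nuP1 (hν : ν₀ ≠ 0) (hθs : θstar ∈ ThetaD1 ν₀) {η : ℝ}
    (hη : θstar + η ∈ ThetaD1 ν₀) :
    ∫⁻ x, ENNReal.ofReal (Real.exp (η * x)) ∂(nuP1 ν₀ θstar)
      = ENNReal.ofReal (Real.exp (psi1 ν₀ (θstar + η) - psi1 ν₀ θstar)) := by
  rw [nuP1, lintegral_withDensity_eq_lintegral_mul _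
    (by exact ENNReal.measurable_ofReal.comp ((measurable_id'.const_mul θstar).sub_const _).exp)
    (meas_ofReal_exp η)]
  have hpt : ∀ x : ℝ,
      (ENNReal.ofReal (Real.exp (θstar * x - psi1 ν₀ θstar)) * ENNReal.ofReal (Real.exp (η * x)))
        = ENNReal.ofReal (Real.exp (- psi1 ν₀ θstar)) * ENNReal.ofReal (Real.exp ((θstar + η) * x)) := by
    intro x
    rw [← ENNReal.ofReal_mul (Real.exp_pos _).le, ← ENNReal.ofReal_mul (Real.exp_pos _).le,
      ← Real.exp_add, ← Real.exp_add]
    ring_nf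
  simp only [Pi.mul_apply]
  simp_rw [hpt]
  rw [lintegral_const_mul _ (meas_ofReal_exp _), ← ofReal_exp_psi1 hν hη,
    ← ENNReal.ofReal_mul (Real.exp_pos _).le, ← Real.exp_add]
  ring_nf

variable {Ω : Type*} [MeasurableSpace Ω] {P : Measure Ω} {X : Ω → ℝ}

lemma integrable_exp_P (hν : ν₀ ≠ 0) (hθs : θstar ∈ ThetaD1 ν₀) {η : ℝ}
    (hη : θstar + η ∈ ThetaD1 ν₀) (hXm : Measurable X) (hmap : P.map X = nuP1 ν₀ θstar) :
    Integrable (fun ω => Real.exp (η * X ω)) P := by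
  have h1 : Integrable (fun x => Real.exp (η * x)) (nuP1 ν₀ θstar) := by
    refine ⟨((measurable_id'.const_mul η).exp).aestronglyMeasurable, ?_⟩
    rw [HasFiniteIntegral]
    have : ∀ x : ℝ, ‖Real.exp (η * x)‖ₑ = ENNReal.ofReal (Real.exp (η * x)) := by
      intro x
      rw [← ofReal_norm_eq_enorm, Real.norm_eq_abs, abs_of_pos (Real.exp_pos _)]
    simp_rw [this]
    rw [lintegral_exp_nuP1 hν hθs hη]
    exact ENNReal.ofReal_lt_top
  rw [← hmap] at h1
  exact (integrable_map_measure ((measurable_id'.const_mul η).exp).aestronglyMeasurable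
    hXm.aemeasurable).mp h1

lemma integral_exp_P (hν : ν₀ ≠ 0) (hθs : θstar ∈ ThetaD1 ν₀) {η : ℝ}
    (hη : θstar + η ∈ ThetaD1 ν₀) (hXm : Measurable X) (hmap : P.map X = nuP1 ν₀ θstar) :
    ∫ ω, Real.exp (η * X ω) ∂P = Real.exp (psi1 ν₀ (θstar + η) - psi1 ν₀ θstar) := by
  have h0 : ∫ ω, Real.exp (η * X ω) ∂P = ∫ x, Real.exp (η * x) ∂(nuP1 ν₀ θstar) := by
    rw [← hmap, integral_map hXm.aemeasurable
      ((measurable_id'.const_mul η).exp).aestronglyMeasurable]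
  rw [h0, MeasureTheory.integral_eq_lintegral_of_nonneg_ae
    (Filter.Eventually.of_forall fun x => (Real.exp_pos _).le)
    ((measurable_id'.const_mul η).exp).aestronglyMeasurable,
    lintegral_exp_nuP1 hν hθs hη, ENNReal.toReal_ofReal (Real.exp_pos _).le]

end BCaux2

namespace BCaux3
open BCaux

variable {ν₀ : Measure ℝ}

lemma psi1_convex (hν : ν₀ ≠ 0) {θ₁ θ₂ s : ℝ} (h₁ : θ₁ ∈ ThetaD1 ν₀) (h₂ : θ₂ ∈ ThetaD1 ν₀)
    (hs0 : 0 < s) (hs1 : s < 1) :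
    psi1 ν₀ (s * θ₁ + (1 - s) * θ₂) ≤ s * psi1 ν₀ θ₁ + (1 - s) * psi1 ν₀ θ₂ := by
  have hs1' : 0 < 1 - s := by linarith
  set p : ℝ := 1 / s with hp
  set q : ℝ := 1 / (1 - s) with hq
  have hpq : p.HolderConjugate q := by
    constructor
    · rw [hp, hq]; simp only [one_div, inv_inv]; ring
    · rw [hp]; positivity
    · rw [hq]; positivity
  set A : ℝ → ℝ≥0∞ := fun x => ENNReal.ofReal (Real.exp (θ₁ * x)) with hA
  set B : ℝ → ℝ≥0∞ := fun x => ENNReal.ofReal (Real.exp (θ₂ * x)) with hB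
  have hf : AEMeasurable (fun x : ℝ => A x ^ s) ν₀ :=
    ((meas_ofReal_exp θ₁).pow_const s).aemeasurable
  have hg : AEMeasurable (fun x : ℝ => B x ^ (1 - s)) ν₀ :=
    ((meas_ofReal_exp θ₂).pow_const (1 - s)).aemeasurable
  have hH := ENNReal.lintegral_mul_le_Lp_mul_Lq ν₀ hpq hf hg
  have hAp : ∀ x, (A x ^ s) ^ p = A x := by
    intro x; rw [← ENNReal.rpow_mul, hp, mul_one_div_cancel hs0.ne', ENNReal.rpow_one]
  have hBq : ∀ x, (B x ^ (1 - s)) ^ q = B x := by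
    intro x; rw [← ENNReal.rpow_mul, hq, mul_one_div_cancel hs1'.ne', ENNReal.rpow_one]
  simp only [Pi.mul_apply] at hH
  simp_rw [hAp, hBq, hp, hq, one_div_one_div] at hH
  have hmid : ∀ x : ℝ, A x ^ s * B x ^ (1 - s)
      = ENNReal.ofReal (Real.exp ((s * θ₁ + (1 - s) * θ₂) * x)) := by
    intro x
    rw [hA, hB]
    simp only
    rw [ENNReal.ofReal_rpow_of_pos (Real.exp_pos _),
      ENNReal.ofReal_rpow_of_pos (Real.exp_pos _),
      ← Real.exp_mul, ← Real.exp_mul, ← ENNReal.ofReal_mul (Real.exp_pos _).le, ← Real.exp_add]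
    ring_nf
  simp_rw [hmid] at hH
  set I₁ : ℝ≥0∞ := ∫⁻ x, A x ∂ν₀ with hI1
  set I₂ : ℝ≥0∞ := ∫⁻ x, B x ∂ν₀ with hI2
  set Im : ℝ≥0∞ := ∫⁻ x, ENNReal.ofReal (Real.exp ((s * θ₁ + (1 - s) * θ₂) * x)) ∂ν₀ with hIm
  have hI1top : I₁ ≠ ⊤ := h₁.ne
  have hI2top : I₂ ≠ ⊤ := h₂.ne
  have hrhs_top : I₁ ^ s * I₂ ^ (1 - s) ≠ ⊤ :=
    ENNReal.mul_ne_top (ENNReal.rpow_ne_top_of_nonneg hs0.le hI1top)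
      (ENNReal.rpow_ne_top_of_nonneg hs1'.le hI2top)
  have hImtop : Im ≠ ⊤ := (lt_of_le_of_lt hH (lt_top_iff_ne_top.2 hrhs_top)).ne
  have htoReal : Im.toReal ≤ I₁.toReal ^ s * I₂.toReal ^ (1 - s) := by
    have := ENNReal.toReal_mono hrhs_top hH
    rwa [ENNReal.toReal_mul, ← ENNReal.toReal_rpow, ← ENNReal.toReal_rpow] at this
  have hImpos : 0 < Im.toReal := ENNReal.toReal_pos (lint_pos hν _).ne' hImtop
  have : Real.log Im.toReal ≤ Real.log (I₁.toReal ^ s * I₂.toReal ^ (1 - s)) :=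
    Real.log_le_log hImpos htoReal
  rw [Real.log_mul (Real.rpow_pos_of_pos (toReal_pos hν h₁) s).ne' (Real.rpow_pos_of_pos (toReal_pos hν h₂) (1-s)).ne', Real.log_rpow (toReal_pos hν h₁),
    Real.log_rpow (toReal_pos hν h₂)] at this
  exact this

end BCaux3

namespace BCaux4
open BCaux BCaux3 Metric

variable {ν₀ : Measure ℝ}

lemma psi1_hasDerivAt (hν : ν₀ ≠ 0) {θstar : ℝ} (hθstar : θstar ∈ interior (ThetaD1 ν₀)) :
    ∃ d : ℝ, HasDerivAt (psi1 ν₀) d θstar := by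
  obtain ⟨δ, hδ0, hball⟩ := Metric.mem_nhds_iff.1 (mem_interior_iff_mem_nhds.1 hθstar)
  set g : ℝ → ℝ := fun θ => ∫ x, Real.exp (θ * x) ∂ν₀ with hg
  have hmem : ∀ θ : ℝ, |θ - θstar| < δ → θ ∈ ThetaD1 ν₀ := by
    intro θ hθ
    exact hball (by rwa [Metric.mem_ball, Real.dist_eq])
  have hplus : θstar + 3 * δ / 4 ∈ ThetaD1 ν₀ := by
    apply hmem; rw [add_sub_cancel_left, abs_of_pos (by linarith)]; linarith
  have hminus : θstar - 3 * δ / 4 ∈ ThetaD1 ν₀ := by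
    apply hmem
    rw [sub_sub_cancel_left, abs_neg, abs_of_pos (by linarith)]; linarith
  set bound : ℝ → ℝ := fun x => (4 / δ) *
    (Real.exp ((θstar + 3 * δ / 4) * x) + Real.exp ((θstar - 3 * δ / 4) * x)) with hbnd
  have hbound_int : Integrable bound ν₀ :=
    (((integrable_exp hplus).add (integrable_exp hminus)).const_mul _)
  have key := hasDerivAt_integral_of_dominated_loc_of_deriv_le (F := fun θ x => Real.exp (θ * x))
    (F' := fun θ x => x * Real.exp (θ * x)) (x₀ := θstar) (bound := bound)
    (Metric.ball_mem_nhds θstar (half_pos hδ0))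
    (Filter.Eventually.of_forall fun θ => ((measurable_id'.const_mul θ).exp).aestronglyMeasurable)
    (integrable_exp (hmem θstar (by simpa using hδ0)))
    ((measurable_id'.mul ((measurable_id'.const_mul θstar).exp)).aestronglyMeasurable)
    ?_ hbound_int ?_
  · obtain ⟨_, hder⟩ := key
    have hgpos : ∀ θ ∈ ThetaD1 ν₀, 0 < g θ := by
      intro θ hθ
      rw [hg]
      simp only
      rw [integral_exp hν hθ]
      exact Real.exp_pos _
    have hlog : HasDerivAt (fun θ => Real.log (g θ))
        ((∫ x, x * Real.exp (θstar * x) ∂ν₀) / g θstar) θstar :=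
      hder.log (hgpos θstar (hmem θstar (by simpa using hδ0))).ne'
    refine ⟨_, hlog.congr_of_eventuallyEq ?_⟩
    have : Metric.ball θstar δ ∈ nhds θstar := Metric.ball_mem_nhds _ hδ0
    filter_upwards [this] with θ hθ
    have hθD : θ ∈ ThetaD1 ν₀ := hball hθ
    rw [hg]
    simp only
    rw [integral_exp hν hθD, Real.log_exp]
  · -- bound on derivative
    refine Filter.Eventually.of_forall fun x θ hθ => ?_
    rw [Metric.mem_ball, Real.dist_eq] at hθ
    have h1 : |x| ≤ (4 / δ) * Real.exp (δ / 4 * |x|) := by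
      have h2 : δ / 4 * |x| ≤ Real.exp (δ / 4 * |x|) :=
        (Real.add_one_le_exp _).trans' (by linarith [abs_nonneg x])
      calc |x| = (4 / δ) * (δ / 4 * |x|) := by field_simp
      _ ≤ (4 / δ) * Real.exp (δ / 4 * |x|) := by
          exact mul_le_mul_of_nonneg_left h2 (by positivity)
    have habs : (θ - θstar) * x ≤ δ / 2 * |x| := by
      calc (θ - θstar) * x ≤ |(θ - θstar) * x| := le_abs_self _
      _ = |θ - θstar| * |x| := abs_mul _ _
      _ ≤ δ / 2 * |x| := mul_le_mul_of_nonneg_right hθ.le (abs_nonneg x)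
    have h3 : Real.exp (θ * x) ≤ Real.exp (θstar * x + δ / 2 * |x|) := by
      apply Real.exp_le_exp.2
      have hxx : θ * x = θstar * x + (θ - θstar) * x := by ring
      rw [hxx]
      linarith
    have h4 : Real.exp (θstar * x + 3 * δ / 4 * |x|)
        ≤ Real.exp ((θstar + 3 * δ / 4) * x) + Real.exp ((θstar - 3 * δ / 4) * x) := by
      rcases abs_cases x with ⟨hx, _⟩ | ⟨hx, _⟩
      · rw [hx]
        have : θstar * x + 3 * δ / 4 * x = (θstar + 3 * δ / 4) * x := by ring
        rw [this]
        exact le_add_of_nonneg_right (Real.exp_pos _).le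
      · rw [hx]
        have : θstar * x + 3 * δ / 4 * -x = (θstar - 3 * δ / 4) * x := by ring
        rw [this]
        exact le_add_of_nonneg_left (Real.exp_pos _).le
    have hnorm : ‖x * Real.exp (θ * x)‖ = |x| * Real.exp (θ * x) := by
      rw [norm_mul, Real.norm_eq_abs, Real.norm_eq_abs, abs_of_pos (Real.exp_pos _)]
    rw [hnorm, hbnd]
    calc |x| * Real.exp (θ * x)
        ≤ (4 / δ) * Real.exp (δ / 4 * |x|) * Real.exp (θstar * x + δ / 2 * |x|) :=
          mul_le_mul h1 h3 (Real.exp_pos _).le (by positivity)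
      _ = (4 / δ) * Real.exp (θstar * x + 3 * δ / 4 * |x|) := by
          rw [mul_assoc, ← Real.exp_add]; ring_nf
      _ ≤ (4 / δ) * (Real.exp ((θstar + 3 * δ / 4) * x) + Real.exp ((θstar - 3 * δ / 4) * x)) :=
          mul_le_mul_of_nonneg_left h4 (by positivity)
  · refine Filter.Eventually.of_forall fun x θ _ => ?_
    have : HasDerivAt (fun θ : ℝ => θ * x) x θ := hasDerivAt_mul_const x
    simpa [mul_comm] using this.exp

end BCaux4

namespace BCaux5
open BCaux BCaux3 BCaux4

variable {ν₀ : Measure ℝ}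

lemma subgradient (hν : ν₀ ≠ 0) {θstar : ℝ} (hθstar : θstar ∈ interior (ThetaD1 ν₀))
    {η : ℝ} (hη : θstar + η ∈ ThetaD1 ν₀) :
    η * deriv (psi1 ν₀) θstar ≤ psi1 ν₀ (θstar + η) - psi1 ν₀ θstar := by
  obtain ⟨d, hd⟩ := psi1_hasDerivAt hν hθstar
  rw [hd.deriv]
  rcases eq_or_ne η 0 with rfl | hη0
  · simp
  have hθsD : θstar ∈ ThetaD1 ν₀ := interior_subset hθstar
  set h : ℝ → ℝ := fun s => psi1 ν₀ (θstar + s * η) with hh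
  have hinner : HasDerivAt (fun s : ℝ => θstar + s * η) η 0 :=
    (hasDerivAt_mul_const η).const_add θstar
  have hcomp : HasDerivAt h (d * η) 0 := by
    have := HasDerivAt.comp 0 (by simpa using hd) hinner
    simpa [hh, Function.comp_def] using this
  have hslope : Filter.Tendsto (slope h 0) (nhdsWithin 0 (Set.Ioi 0)) (nhds (d * η)) := by
    have := hasDerivAt_iff_tendsto_slope.1 hcomp
    exact this.mono_left (nhdsWithin_mono _ (fun s hs => ne_of_gt hs))
  have hbound : ∀ᶠ s in nhdsWithin 0 (Set.Ioi 0),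
      slope h 0 s ≤ psi1 ν₀ (θstar + η) - psi1 ν₀ θstar := by
    filter_upwards [Ioo_mem_nhdsGT_of_mem (Set.left_mem_Ico.2 one_pos)] with s hs
    obtain ⟨hs0, hs1⟩ := hs
    have hcvx := psi1_convex hν hη hθsD hs0 hs1
    have harg : s * (θstar + η) + (1 - s) * θstar = θstar + s * η := by ring
    rw [harg] at hcvx
    rw [slope_def_field, hh]
    simp only
    rw [show θstar + 0 * η = θstar by ring, sub_zero, div_le_iff₀ hs0]
    nlinarith [hcvx]
  have := le_of_tendsto hslope hbound
  nlinarith [this]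

end BCaux5

namespace BCaux6
open BCaux BCaux5

variable {ν₀ : Measure ℝ} {θstar : ℝ}

def Sdual (ν₀ : Measure ℝ) (θstar y : ℝ) : Set ℝ :=
  {r | ∃ η : ℝ, θstar + η ∈ ThetaD1 ν₀ ∧
    r = η * y - psi1 ν₀ (θstar + η) + psi1 ν₀ θstar}

lemma phiStar1_eq (y : ℝ) : phiStar1 ν₀ θstar y = sSup (Sdual ν₀ θstar y) := rfl

lemma zero_mem_Sdual (hθs : θstar ∈ ThetaD1 ν₀) (y : ℝ) : (0 : ℝ) ∈ Sdual ν₀ θstar y :=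
  ⟨0, by simpa using hθs, by simp⟩

lemma bddAbove_of_sSup_pos {S : Set ℝ} (h : 0 < sSup S) : BddAbove S := by
  by_contra hb
  rw [Real.sSup_of_not_bddAbove hb] at h
  exact lt_irrefl _ h

/-- Every element of the dual set at `y ≤ d` with `η ≥ -c` is at most `c * (d - y)`. -/
lemma Sdual_le (hν : ν₀ ≠ 0) (hθstar : θstar ∈ interior (ThetaD1 ν₀))
    {y FM c : ℝ} (hy : y ≤ deriv (psi1 ν₀) θstar) (hc : 0 < c)
    (hbFM : BddAbove (Sdual ν₀ θstar FM)) (hFMy : FM ≤ y)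
    {r : ℝ} (hr : r ∈ Sdual ν₀ θstar y) :
    r ≤ max (sSup (Sdual ν₀ θstar FM) - c * (y - FM)) (c * (deriv (psi1 ν₀) θstar - y)) := by
  obtain ⟨η, hηD, rfl⟩ := hr
  set d := deriv (psi1 ν₀) θstar with hd
  have hsub : η * d ≤ psi1 ν₀ (θstar + η) - psi1 ν₀ θstar := subgradient hν hθstar hηD
  rcases le_or_gt (-c) η with hcase | hcase
  · refine le_max_of_le_right ?_
    have : η * y - psi1 ν₀ (θstar + η) + psi1 ν₀ θstar ≤ η * y - η * d := by linarith
    refine this.trans ?_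
    have h1 : η * y - η * d = (-η) * (d - y) := by ring
    rw [h1]
    exact mul_le_mul_of_nonneg_right (by linarith) (by linarith)
  · refine le_max_of_le_left ?_
    have hmem : η * FM - psi1 ν₀ (θstar + η) + psi1 ν₀ θstar ∈ Sdual ν₀ θstar FM := ⟨η, hηD, rfl⟩
    have hle : η * FM - psi1 ν₀ (θstar + η) + psi1 ν₀ θstar ≤ sSup (Sdual ν₀ θstar FM) :=
      le_csSup hbFM hmem
    have : η * y = η * FM + η * (y - FM) := by ring
    have h2 : η * (y - FM) ≤ -c * (y - FM) :=
      mul_le_mul_of_nonneg_right hcase.le (by linarith)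
    linarith

/-- Key monotonicity: if `Φ*(y) ≥ Φ*(F_M) > 0` and `y ≤ μ*`, `F_M ≤ μ*`, then `y ≤ F_M`. -/
lemma le_FM (hν : ν₀ ≠ 0) (hθstar : θstar ∈ interior (ThetaD1 ν₀))
    {y FM : ℝ} (hy : y ≤ deriv (psi1 ν₀) θstar)
    (ha : 0 < phiStar1 ν₀ θstar FM)
    (hge : phiStar1 ν₀ θstar FM ≤ phiStar1 ν₀ θstar y) : y ≤ FM := by
  by_contra hlt
  push_neg at hlt
  set d := deriv (psi1 ν₀) θstar with hd
  set a := phiStar1 ν₀ θstar FM with haeq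
  have hbFM : BddAbove (Sdual ν₀ θstar FM) := bddAbove_of_sSup_pos ha
  have hySup : 0 < sSup (Sdual ν₀ θstar y) := lt_of_lt_of_le ha hge
  have hby : BddAbove (Sdual ν₀ θstar y) := bddAbove_of_sSup_pos hySup
  have hdy : 0 ≤ d - y := by linarith
  set c : ℝ := a / (2 * (d - y + 1)) with hc
  have hc0 : 0 < c := by
    apply div_pos ha
    linarith
  have hub : ∀ r ∈ Sdual ν₀ θstar y,
      r ≤ max (a - c * (y - FM)) (c * (d - y)) := fun r hr =>
    Sdual_le hν hθstar hy hc0 hbFM hlt.le hr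
  have hne : (Sdual ν₀ θstar y).Nonempty := ⟨0, zero_mem_Sdual (interior_subset hθstar) y⟩
  have hsup_le : sSup (Sdual ν₀ θstar y) ≤ max (a - c * (y - FM)) (c * (d - y)) :=
    csSup_le hne hub
  have hlt1 : a - c * (y - FM) < a := by nlinarith
  have hlt2 : c * (d - y) < a := by
    rw [hc]
    rw [div_mul_eq_mul_div, div_lt_iff₀ (by linarith)]
    nlinarith
  have : sSup (Sdual ν₀ θstar y) < a := hsup_le.trans_lt (max_lt hlt1 hlt2)
  have : phiStar1 ν₀ θstar y < a := this
  linarith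

/-- Existence of a strictly negative near-maximizer. -/
lemma exists_neg_eta (hν : ν₀ ≠ 0) (hθstar : θstar ∈ interior (ThetaD1 ν₀))
    {FM : ℝ} (hFM : FM ≤ deriv (psi1 ν₀) θstar)
    (ha : 0 < phiStar1 ν₀ θstar FM) {ε : ℝ} (hε0 : 0 < ε) (hεa : ε ≤ phiStar1 ν₀ θstar FM) :
    ∃ η : ℝ, η < 0 ∧ θstar + η ∈ ThetaD1 ν₀ ∧
      phiStar1 ν₀ θstar FM - ε < η * FM - psi1 ν₀ (θstar + η) + psi1 ν₀ θstar := by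
  have hne : (Sdual ν₀ θstar FM).Nonempty := ⟨0, zero_mem_Sdual (interior_subset hθstar) FM⟩
  obtain ⟨r, hrmem, hrgt⟩ := exists_lt_of_lt_csSup hne
    (show phiStar1 ν₀ θstar FM - ε < sSup (Sdual ν₀ θstar FM) by
      rw [← phiStar1_eq]; linarith)
  obtain ⟨η, hηD, rfl⟩ := hrmem
  refine ⟨η, ?_, hηD, hrgt⟩
  by_contra hη
  push_neg at hη
  have hsub : η * deriv (psi1 ν₀) θstar ≤ psi1 ν₀ (θstar + η) - psi1 ν₀ θstar :=
    subgradient hν hθstar hηD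
  have h1 : η * FM ≤ η * deriv (psi1 ν₀) θstar := by
    rcases eq_or_lt_of_le hη with rfl | hη'
    · simp
    · nlinarith
  linarith

end BCaux6

namespace BCaux7
open BCaux BCaux2 Filtration

variable {ν₀ : Measure ℝ} {θstar : ℝ} {Ω : Type*} [MeasurableSpace Ω]

set_option maxHeartbeats 2000000 in
lemma maximal (hν : ν₀ ≠ 0) (hθs : θstar ∈ ThetaD1 ν₀) {η : ℝ} (hηD : θstar + η ∈ ThetaD1 ν₀)
    (P : Measure Ω) [IsProbabilityMeasure P] (X : ℕ → Ω → ℝ)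
    (hXm : ∀ i, Measurable (X i))
    (hind : iIndepFun X P)
    (hmap : ∀ i, P.map (X i) = nuP1 ν₀ θstar)
    (N : ℕ) {lam : ℝ} (hlam : 0 < lam) :
    P {ω | ∃ k ≤ N, lam ≤ Real.exp (η * ∑ i ∈ Finset.range (k + 1), X i ω
        - (k + 1 : ℝ) * (psi1 ν₀ (θstar + η) - psi1 ν₀ θstar))}
      ≤ ENNReal.ofReal (1 / lam) := by
  set Φη : ℝ := psi1 ν₀ (θstar + η) - psi1 ν₀ θstar with hPhi
  set W : ℕ → Ω → ℝ := fun k ω => Real.exp (η * ∑ i ∈ Finset.range (k + 1), X i ω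
    - (k + 1 : ℝ) * Φη) with hW
  set 𝒢 := Filtration.natural X (fun i => (hXm i).stronglyMeasurable) with hG
  have hXGk : ∀ k i : ℕ, i ≤ k → Measurable[𝒢 k] (X i) := by
    intro k i hik
    have hle : MeasurableSpace.comap (X i) inferInstance ≤ 𝒢 k := by
      show MeasurableSpace.comap (X i) inferInstance
        ≤ ⨆ j, ⨆ _ : j ≤ k, MeasurableSpace.comap (X j) inferInstance
      exact le_iSup₂_of_le i hik le_rfl
    exact (comap_measurable (X i)).mono hle le_rfl
  have hadp : StronglyAdapted 𝒢 W := by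
    intro k
    apply Measurable.stronglyMeasurable
    apply Measurable.exp
    apply Measurable.sub_const
    apply Measurable.const_mul
    exact Finset.measurable_sum _ (fun i hi => hXGk k i (Nat.lt_succ_iff.1 (Finset.mem_range.1 hi)))
  have hintexp : ∀ (s : Finset ℕ), Integrable (fun ω => Real.exp (η * ∑ i ∈ s, X i ω)) P := by
    intro s
    have h0 : Integrable (fun ω => Real.exp (η * (∑ i ∈ s, X i) ω)) P :=
      hind.integrable_exp_mul_sum hXm
        (fun i _ => BCaux2.integrable_exp_P hν hθs hηD (hXm i) (hmap i))
    have he : (fun ω => Real.exp (η * (∑ i ∈ s, X i) ω))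
        = fun ω => Real.exp (η * ∑ i ∈ s, X i ω) := by
      funext ω
      rw [Finset.sum_apply]
    rwa [he] at h0
  have hWeq : ∀ k, W k = fun ω => Real.exp (-((k + 1 : ℝ) * Φη))
      * Real.exp (η * ∑ i ∈ Finset.range (k + 1), X i ω) := by
    intro k
    funext ω
    rw [hW]
    simp only
    rw [← Real.exp_add]
    ring_nf
  have hint : ∀ k, Integrable (W k) P := by
    intro k
    rw [hWeq k]
    exact (hintexp (Finset.range (k + 1))).const_mul _
  have hWint : ∀ k, ∫ ω, W k ω ∂P = 1 := by
    intro k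
    rw [hWeq k]
    rw [integral_const_mul]
    have hmgf : ∫ ω, Real.exp (η * ∑ i ∈ Finset.range (k + 1), X i ω) ∂P
        = Real.exp ((k + 1 : ℝ) * Φη) := by
      have h1 := hind.mgf_sum hXm (s := Finset.range (k + 1)) (t := η)
      have h2 : mgf (∑ i ∈ Finset.range (k + 1), X i) P η
          = ∫ ω, Real.exp (η * ∑ i ∈ Finset.range (k + 1), X i ω) ∂P := by
        rw [mgf]
        congr 1
        funext ω
        simp [Finset.sum_apply]
      rw [h2] at h1
      rw [h1]
      have h3 : ∀ i ∈ Finset.range (k + 1), mgf (X i) P η = Real.exp Φη := by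
        intro i _
        rw [mgf, integral_exp_P hν hθs hηD (hXm i) (hmap i), hPhi]
      rw [Finset.prod_congr rfl h3, Finset.prod_const, Finset.card_range, ← Real.exp_nat_mul]
      push_cast
      ring_nf
    rw [hmgf, ← Real.exp_add]
    simp
  -- martingale property
  have hmart : Martingale W 𝒢 P := by
    refine martingale_nat hadp hint (fun k => ?_)
    set Z : Ω → ℝ := fun ω => Real.exp (η * X (k + 1) ω - Φη) with hZ
    have hWsucc : W (k + 1) = fun ω => W k ω * Z ω := by
      funext ω
      rw [hW, hZ]
      simp only
      rw [Finset.sum_range_succ, ← Real.exp_add]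
      congr 1
      push_cast
      ring
    have hZm : Measurable Z := ((measurable_id'.const_mul η).sub_const Φη).exp.comp (hXm (k + 1))
    have hZint : Integrable Z P := by
      have : Z = fun ω => Real.exp (-Φη) * Real.exp (η * X (k + 1) ω) := by
        funext ω; rw [hZ]; simp only [← Real.exp_add]; ring_nf
      rw [this]
      exact (integrable_exp_P hν hθs hηD (hXm (k + 1)) (hmap (k + 1))).const_mul _
    have hZval : ∫ ω, Z ω ∂P = 1 := by
      have : Z = fun ω => Real.exp (-Φη) * Real.exp (η * X (k + 1) ω) := by
        funext ω; rw [hZ]; simp only [← Real.exp_add]; ring_nf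
      rw [this, integral_const_mul, integral_exp_P hν hθs hηD (hXm (k + 1)) (hmap (k + 1)),
        ← Real.exp_add, hPhi]
      simp
    have hZsm : StronglyMeasurable[MeasurableSpace.comap (X (k + 1)) inferInstance] Z := by
      apply Measurable.stronglyMeasurable
      exact ((measurable_id'.const_mul η).sub_const Φη).exp.comp (comap_measurable (X (k + 1)))
    have hindep : ProbabilityTheory.Indep
        (MeasurableSpace.comap (X (k + 1)) inferInstance) (𝒢 k) P :=
      hind.indep_comap_natural_of_lt (fun i => (hXm i).stronglyMeasurable) (k.lt_succ_self)
    have hcond : P[Z | 𝒢 k] =ᵐ[P] fun _ => ∫ ω, Z ω ∂P :=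
      condExp_indep_eq (hXm (k + 1)).comap_le (𝒢.le k) hZsm hindep
    have hpull : P[W (k + 1) | 𝒢 k] =ᵐ[P] W k * P[Z | 𝒢 k] := by
      rw [hWsucc]
      have hWZ : W k * Z = W (k + 1) := by
        funext ω
        simp only [Pi.mul_apply, hWsucc]
      exact condExp_mul_of_stronglyMeasurable_left (hadp k) (by rw [hWZ]; exact hint (k + 1)) hZint
    refine (Filter.EventuallyEq.symm ?_)
    refine hpull.trans ?_
    filter_upwards [hcond] with ω hω
    simp only [Pi.mul_apply, hω, hZval, mul_one]
  have hnonneg : 0 ≤ W := fun k ω => (Real.exp_pos _).le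
  set εNN : NNReal := lam.toNNReal with hεNN
  have hmax := MeasureTheory.maximal_ineq (μ := P) (𝒢 := 𝒢) hmart.submartingale hnonneg
    (ε := εNN) N
  have hsub : {ω | ∃ k ≤ N, lam ≤ W k ω}
      ⊆ {ω | (εNN : ℝ) ≤ (Finset.range (N + 1)).sup' Finset.nonempty_range_add_one
          fun k => W k ω} := by
    intro ω hω
    obtain ⟨k, hkN, hk⟩ := hω
    have hmem : k ∈ Finset.range (N + 1) := Finset.mem_range.2 (Nat.lt_succ_of_le hkN)
    refine le_trans ?_ (Finset.le_sup' (fun k => W k ω) hmem)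
    rw [Real.coe_toNNReal _ hlam.le]
    exact hk
  have hPle : P {ω | ∃ k ≤ N, lam ≤ W k ω} ≤ (εNN : ℝ≥0∞)⁻¹ := by
    have h1 : (εNN : ℝ≥0∞) * P {ω | ∃ k ≤ N, lam ≤ W k ω}
        ≤ (εNN : ℝ≥0∞) * P {ω | (εNN : ℝ) ≤ (Finset.range (N + 1)).sup'
          Finset.nonempty_range_add_one fun k => W k ω} :=
      mul_le_mul_right (measure_mono hsub) _
    have h2 := hmax.trans (ENNReal.ofReal_le_ofReal
      (setIntegral_le_integral (hint N) (Filter.Eventually.of_forall fun ω => hnonneg N ω)))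
    rw [hWint N] at h2
    have h3 : (εNN : ℝ≥0∞) * P {ω | ∃ k ≤ N, lam ≤ W k ω} ≤ 1 := by
      refine h1.trans ?_
      rw [← smul_eq_mul]
      simpa using h2
    have hεne : (εNN : ℝ≥0∞) ≠ 0 := by
      simp [hεNN, ENNReal.coe_eq_zero, Real.toNNReal_eq_zero, not_le, hlam]
    exact ENNReal.le_inv_iff_mul_le.2 (by rwa [mul_comm] at h3)
  refine hPle.trans ?_
  rw [one_div, ENNReal.ofReal_inv_of_pos hlam]
  exact le_of_eq rfl

end BCaux7

/-- Dimension 1: if `n ↦ f(t/n)/n` is non-increasing on `[m, M]` and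
there is `F_M ≤ μ*` with `Φ*(F_M) = f(t/M)/M`, then
`Pr(∃ n, m ≤ n < M, F̂_n ≤ μ* and Φ*(F̂_n) ≥ f(t/n)/n) ≤ exp(-(m/M) f(t/M))`. -/
theorem dim1_boundary_crossing (ν₀ : Measure ℝ) [SigmaFinite ν₀]
    (θstar : ℝ) (hθstar : θstar ∈ interior (ThetaD1 ν₀))
    (t : ℝ) (ht : 0 < t) (m M : ℕ) (hm : 1 ≤ m) (hmM : m ≤ M)
    (f : ℝ → ℝ)
    (hf : ∀ n n' : ℕ, m ≤ n → n ≤ n' → n' ≤ M →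
      f (t / (n' : ℝ)) / (n' : ℝ) ≤ f (t / (n : ℝ)) / (n : ℝ))
    (FM : ℝ) (hFM : FM ≤ deriv (psi1 ν₀) θstar)
    (hFMeq : phiStar1 ν₀ θstar FM = f (t / (M : ℝ)) / (M : ℝ))
    {Ω : Type*} [MeasurableSpace Ω] (P : Measure Ω) [IsProbabilityMeasure P]
    (X : ℕ → Ω → ℝ) (hX : IsIID1 P X (nuP1 ν₀ θstar)) :
    P {ω | ∃ n : ℕ, m ≤ n ∧ n < M ∧ empMean X n ω ≤ deriv (psi1 ν₀) θstar ∧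
        phiStar1 ν₀ θstar (empMean X n ω) ≥ f (t / (n : ℝ)) / (n : ℝ)}
      ≤ ENNReal.ofReal (Real.exp (-((m : ℝ) / (M : ℝ)) * f (t / (M : ℝ)))) := by
  obtain ⟨hXm, hind, hmap⟩ := hX
  set E := {ω | ∃ n : ℕ, m ≤ n ∧ n < M ∧ empMean X n ω ≤ deriv (psi1 ν₀) θstar ∧
        phiStar1 ν₀ θstar (empMean X n ω) ≥ f (t / (n : ℝ)) / (n : ℝ)} with hE
  have hθsD : θstar ∈ ThetaD1 ν₀ := interior_subset hθstar
  have hprob : IsProbabilityMeasure (nuP1 ν₀ θstar) := by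
    rw [← hmap 0]
    exact Measure.isProbabilityMeasure_map (hXm 0).aemeasurable
  have hν : ν₀ ≠ 0 := by
    intro h
    have h1 : nuP1 ν₀ θstar Set.univ = 1 := measure_univ
    rw [nuP1, h] at h1
    simp at h1
  set a : ℝ := f (t / (M : ℝ)) / (M : ℝ) with haa
  rcases le_or_gt a 0 with hcase | ha
  · -- trivial case
    have h1 : -((m : ℝ) / (M : ℝ)) * f (t / (M : ℝ)) = (m : ℝ) * (-a) := by
      rcases Nat.eq_zero_or_pos M with rfl | hM0
      · simp [haa]
      · have : (M : ℝ) ≠ 0 := Nat.cast_ne_zero.2 hM0.ne'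
        rw [haa]; field_simp
    rw [h1]
    calc P E ≤ 1 := prob_le_one
    _ ≤ ENNReal.ofReal (Real.exp ((m : ℝ) * (-a))) := by
        apply ENNReal.one_le_ofReal.2
        apply Real.one_le_exp
        have : (0 : ℝ) ≤ -a := by linarith
        positivity
  · -- main case
    have hM0 : 0 < M := lt_of_lt_of_le hm hmM
    have hMR : (M : ℝ) ≠ 0 := Nat.cast_ne_zero.2 hM0.ne'
    have hgoal_eq : -((m : ℝ) / (M : ℝ)) * f (t / (M : ℝ)) = -((m : ℝ) * a) := by
      rw [haa]; field_simp
    rw [hgoal_eq]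
    rcases eq_or_lt_of_le hmM with rfl | hmM'
    · have hEempty : E = ∅ := by
        ext ω
        simp only [hE, Set.mem_setOf_eq, Set.mem_empty_iff_false, iff_false]
        rintro ⟨n, h1, h2, -⟩
        omega
      rw [hEempty]
      simp
    -- m < M
    have claim : ∀ ε : ℝ, 0 < ε → ε ≤ a →
        P E ≤ ENNReal.ofReal (Real.exp (-((m : ℝ) * (a - ε)))) := by
      intro ε hε0 hεa
      obtain ⟨η, hηneg, hηD, hηval⟩ := BCaux6.exists_neg_eta hν hθstar hFM
        (by rw [hFMeq]; exact ha) hε0 (by rw [hFMeq]; exact hεa)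
      rw [hFMeq] at hηval
      set Φη : ℝ := psi1 ν₀ (θstar + η) - psi1 ν₀ θstar with hPhi
      set lam : ℝ := Real.exp ((m : ℝ) * (a - ε)) with hlam
      have hlam0 : 0 < lam := Real.exp_pos _
      have hsub : E ⊆ {ω | ∃ k ≤ M - 2, lam ≤ Real.exp (η * ∑ i ∈ Finset.range (k + 1), X i ω
          - (k + 1 : ℝ) * Φη)} := by
        intro ω hω
        obtain ⟨n, hmn, hnM, hFle, hPhige⟩ := hω
        have h1n : 1 ≤ n := le_trans hm hmn
        have hnR : (0 : ℝ) < n := by exact_mod_cast h1n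
        set y : ℝ := empMean X n ω with hy
        have hay : a ≤ phiStar1 ν₀ θstar y :=
          le_trans (hf n M hmn hnM.le le_rfl) hPhige
        have hyFM : y ≤ FM := BCaux6.le_FM hν hθstar hFle
          (by rw [hFMeq]; exact ha) (by rw [hFMeq]; exact hay)
        refine ⟨n - 1, by omega, ?_⟩
        have hk1 : n - 1 + 1 = n := Nat.sub_add_cancel h1n
        rw [hk1]
        have hkR : ((n - 1 : ℕ) : ℝ) + 1 = (n : ℝ) := by
          rw [Nat.cast_sub h1n]
          push_cast
          ring
        rw [hkR]
        set S : ℝ := ∑ i ∈ Finset.range n, X i ω with hS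
        have hSy : S = (n : ℝ) * y := by
          rw [hy, empMean, ← hS]
          field_simp
        apply Real.exp_le_exp.2
        have step1 : (m : ℝ) * (a - ε) ≤ (n : ℝ) * (a - ε) := by
          apply mul_le_mul_of_nonneg_right _ (by linarith)
          exact_mod_cast hmn
        have step2 : (n : ℝ) * (a - ε) ≤ (n : ℝ) * (η * FM - Φη) := by
          apply mul_le_mul_of_nonneg_left _ hnR.le
          rw [hPhi]; linarith
        have step3 : (n : ℝ) * (η * FM - Φη) ≤ (n : ℝ) * (η * y - Φη) := by
          apply mul_le_mul_of_nonneg_left _ hnR.le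
          have : η * y ≥ η * FM := by nlinarith
          linarith
        have step4 : (n : ℝ) * (η * y - Φη) = η * S - (n : ℝ) * Φη := by
          rw [hSy]; ring
        linarith
      calc P E ≤ P {ω | ∃ k ≤ M - 2, lam ≤ Real.exp (η * ∑ i ∈ Finset.range (k + 1), X i ω
          - (k + 1 : ℝ) * Φη)} := measure_mono hsub
      _ ≤ ENNReal.ofReal (1 / lam) :=
          BCaux7.maximal hν hθsD hηD P X hXm hind hmap (M - 2) hlam0
      _ = ENNReal.ofReal (Real.exp (-((m : ℝ) * (a - ε)))) := by
          rw [hlam, one_div, ← Real.exp_neg]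
    -- limit as ε → 0⁺
    have hPtop : P E ≠ ⊤ := (measure_lt_top P E).ne
    rw [ENNReal.le_ofReal_iff_toReal_le hPtop (Real.exp_pos _).le]
    have htends : Filter.Tendsto (fun ε : ℝ => Real.exp (-((m : ℝ) * (a - ε))))
        (nhdsWithin 0 (Set.Ioi 0)) (nhds (Real.exp (-((m : ℝ) * a)))) := by
      have hc : Continuous (fun ε : ℝ => Real.exp (-((m : ℝ) * (a - ε)))) := by continuity
      have h2 : Filter.Tendsto (fun ε : ℝ => Real.exp (-((m : ℝ) * (a - ε))))
          (nhdsWithin 0 (Set.Ioi 0)) (nhds (Real.exp (-((m : ℝ) * (a - 0))))) :=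
        (hc.tendsto 0).mono_left nhdsWithin_le_nhds
      simpa using h2
    refine ge_of_tendsto htends ?_
    filter_upwards [Ioc_mem_nhdsGT_of_mem (Set.left_mem_Ico.2 ha)] with ε hε
    have := claim ε hε.1 hε.2
    rw [ENNReal.le_ofReal_iff_toReal_le hPtop (Real.exp_pos _).le] at this
    exact this
end
end
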